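/- arXiv:1904.03938 — 10 statements merged into one kernel-verified Lean document; each statement's English description precedes it below -/
import Mathlib

section
/- There exists T₃ > T₀ such that F₁'(t) > 0 and F₂'(t) > 0 for all t ≥ T₃. -/
open Real Set Filter

lemma aux_exists_pos_deriv (a k β R : ℝ) (hk : 0 < k) (hβ : 0 < β) (F : ℝ → ℝ)
    (hc : ContinuousOn F (Ici a))
    (hd : ∀ t ∈ Ioi a, DifferentiableAt ℝ F t)
    (hlb : ∀ t, a ≤ t → k * (t + R) ^ β ≤ F t) :
    ∃ t, a ≤ t ∧ 0 < deriv F t := by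
  by_contra h
  push_neg at h
  have hant : AntitoneOn F (Ici a) :=
    antitoneOn_of_deriv_nonpos (convex_Ici a) hc
      (fun x hx => (hd x (by rwa [interior_Ici] at hx)).differentiableWithinAt)
      (fun x hx => h x (le_of_lt (by rwa [interior_Ici] at hx)))
  have htend : Tendsto (fun t : ℝ => k * (t + R) ^ β) atTop atTop := by
    apply Tendsto.const_mul_atTop hk
    have := (tendsto_rpow_atTop hβ).comp (tendsto_atTop_add_const_right atTop R tendsto_id)
    exact this
  obtain ⟨t, h1, h2⟩ := ((htend.eventually_gt_atTop (F a)).and (eventually_ge_atTop a)).exists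
  have hA := hant self_mem_Ici h2 h2
  have hB := hlb t h2
  linarith


/-- There exists `T₃ > T₀` such that `F₁'(t) > 0` and `F₂'(t) > 0` for all `t ≥ T₃`. -/
theorem stmt_0
    (p q α₁ α₂ β₁ β₂ β₃ k₀ k₂ k₃ k₄ R T₀ : ℝ)
    (hp : 1 < p) (hq : 1 < q)
    (hα₂ : 0 ≤ α₂) (hβ₂ : 0 ≤ β₂) (hβ₃ : 0 ≤ β₃)
    (hα₁ : 0 < α₁) (hβ₁ : 0 < β₁)
    (hk₀ : 0 < k₀) (hk₂ : 0 < k₂) (hk₃ : 0 < k₃) (hk₄ : 0 < k₄)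
    (hR : 0 < R) (hT₀ : 0 < T₀)
    (F₁ F₂ : ℝ → ℝ)
    (hF₁ : ContDiffOn ℝ 2 F₁ (Ici T₀)) (hF₂ : ContDiffOn ℝ 2 F₂ (Ici T₀))
    (h1 : ∀ t, T₀ ≤ t → k₀ * (t + R) ^ α₁ ≤ F₁ t)
    (h2 : ∀ t, T₀ ≤ t →
      k₂ * (t + R) ^ (-α₂) * (F₂ t) ^ p ≤ deriv (deriv F₁) t + deriv F₁ t)
    (h3 : ∀ t, T₀ ≤ t → k₃ * (t + R) ^ β₁ ≤ F₂ t)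
    (h4 : ∀ t, T₀ ≤ t →
      k₄ * Real.exp (-β₃ * t) * (t + R) ^ (-β₂) * (F₁ t) ^ q ≤ deriv (deriv F₂) t) :
    ∃ T₃, T₀ < T₃ ∧ ∀ t, T₃ ≤ t → 0 < deriv F₁ t ∧ 0 < deriv F₂ t := by
  have hIoi : (Ioi T₀ : Set ℝ) ⊆ Ici T₀ := Ioi_subset_Ici le_rfl
  have hO : IsOpen (Ioi T₀) := isOpen_Ioi
  have hsub : (Ici (T₀ + 1) : Set ℝ) ⊆ Ioi T₀ := fun x hx => lt_of_lt_of_le (by linarith : T₀ < T₀ + 1) hx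
  -- positivity
  have hRt : ∀ t : ℝ, T₀ ≤ t → 0 < t + R := fun t ht => by linarith
  have hF₁pos : ∀ t, T₀ ≤ t → 0 < F₁ t := fun t ht =>
    lt_of_lt_of_le (mul_pos hk₀ (rpow_pos_of_pos (hRt t ht) α₁)) (h1 t ht)
  have hF₂pos : ∀ t, T₀ ≤ t → 0 < F₂ t := fun t ht =>
    lt_of_lt_of_le (mul_pos hk₃ (rpow_pos_of_pos (hRt t ht) β₁)) (h3 t ht)
  -- differentiability
  have c1 : ContDiffOn ℝ 2 F₁ (Ioi T₀) := hF₁.mono hIoi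
  have c2 : ContDiffOn ℝ 2 F₂ (Ioi T₀) := hF₂.mono hIoi
  have d1 : ∀ t ∈ Ioi T₀, DifferentiableAt ℝ F₁ t := fun t ht =>
    (c1.differentiableOn (by norm_num)).differentiableAt (hO.mem_nhds ht)
  have d2 : ∀ t ∈ Ioi T₀, DifferentiableAt ℝ F₂ t := fun t ht =>
    (c2.differentiableOn (by norm_num)).differentiableAt (hO.mem_nhds ht)
  have c1' : ContDiffOn ℝ 1 (deriv F₁) (Ioi T₀) := c1.deriv_of_isOpen hO (by norm_num)
  have c2' : ContDiffOn ℝ 1 (deriv F₂) (Ioi T₀) := c2.deriv_of_isOpen hO (by norm_num)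
  have d1' : ∀ t ∈ Ioi T₀, DifferentiableAt ℝ (deriv F₁) t := fun t ht =>
    (c1'.differentiableOn one_ne_zero).differentiableAt (hO.mem_nhds ht)
  have d2' : ∀ t ∈ Ioi T₀, DifferentiableAt ℝ (deriv F₂) t := fun t ht =>
    (c2'.differentiableOn one_ne_zero).differentiableAt (hO.mem_nhds ht)
  ---- F₂ part ----
  have hdd2pos : ∀ t, T₀ ≤ t → 0 < deriv (deriv F₂) t := fun t ht => by
    refine lt_of_lt_of_le ?_ (h4 t ht)
    have h5 := hF₁pos t ht
    have h6 := hRt t ht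
    positivity
  have hmono2 : StrictMonoOn (deriv F₂) (Ici (T₀ + 1)) := by
    refine strictMonoOn_of_deriv_pos (convex_Ici _) (c2'.continuousOn.mono hsub) ?_
    intro x hx
    rw [interior_Ici] at hx
    exact hdd2pos x (by linarith [mem_Ioi.mp hx])
  obtain ⟨t₂, ht₂a, ht₂b⟩ := aux_exists_pos_deriv (T₀ + 1) k₃ β₁ R hk₃ hβ₁ F₂
    (c2.continuousOn.mono hsub) (fun t ht => d2 t (hsub (mem_Ici.mpr (le_of_lt ht))))
    (fun t ht => h3 t (by linarith))
  have hF₂' : ∀ t, t₂ ≤ t → 0 < deriv F₂ t := by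
    intro t ht
    rcases eq_or_lt_of_le ht with rfl | hlt
    · exact ht₂b
    · exact lt_trans ht₂b (hmono2 ht₂a (le_trans ht₂a ht) hlt)
  ---- F₁ part ----
  set G : ℝ → ℝ := fun t => Real.exp t * deriv F₁ t with hGdef
  have hG : ∀ t ∈ Ioi T₀, HasDerivAt G (Real.exp t * (deriv (deriv F₁) t + deriv F₁ t)) t := by
    intro t ht
    have h := (Real.hasDerivAt_exp t).mul ((d1' t ht).hasDerivAt)
    exact h.congr_deriv (by ring)
  have hGdiff : ∀ t ∈ Ioi T₀, DifferentiableAt ℝ G t := fun t ht => (hG t ht).differentiableAt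
  have hGpos : ∀ x ∈ Ioi T₀, 0 < deriv G x := by
    intro x hx
    rw [(hG x hx).deriv]
    have hx' : T₀ ≤ x := le_of_lt hx
    have h2' := h2 x hx'
    have hp2 : 0 < k₂ * (x + R) ^ (-α₂) * (F₂ x) ^ p := by
      have := hF₂pos x hx'
      have := hRt x hx'
      positivity
    have : 0 < deriv (deriv F₁) x + deriv F₁ x := lt_of_lt_of_le hp2 h2'
    have he := Real.exp_pos x
    positivity
  have hmono1 : StrictMonoOn G (Ici (T₀ + 1)) := by
    refine strictMonoOn_of_deriv_pos (convex_Ici _) ?_ ?_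
    · exact fun x hx => ((hGdiff x (hsub hx)).continuousAt).continuousWithinAt
    · intro x hx
      rw [interior_Ici] at hx
      exact hGpos x (hsub (mem_Ici.mpr (le_of_lt hx)))
  obtain ⟨t₁, ht₁a, ht₁b⟩ := aux_exists_pos_deriv (T₀ + 1) k₀ α₁ R hk₀ hα₁ F₁
    (c1.continuousOn.mono hsub) (fun t ht => d1 t (hsub (mem_Ici.mpr (le_of_lt ht))))
    (fun t ht => h1 t (by linarith))
  have hGt₁ : 0 < G t₁ := mul_pos (Real.exp_pos t₁) ht₁b
  have hF₁' : ∀ t, t₁ ≤ t → 0 < deriv F₁ t := by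
    intro t ht
    have hGt : 0 < G t := by
      rcases eq_or_lt_of_le ht with rfl | hlt
      · exact hGt₁
      · exact lt_trans hGt₁ (hmono1 ht₁a (le_trans ht₁a ht) hlt)
    have he := Real.exp_pos t
    have hGt' : 0 < Real.exp t * deriv F₁ t := hGt
    nlinarith [hGt']
  ---- conclude ----
  refine ⟨max t₁ t₂, ?_, ?_⟩
  · calc T₀ < T₀ + 1 := by linarith
      _ ≤ t₁ := ht₁a
      _ ≤ max t₁ t₂ := le_max_left _ _
  · intro t ht
    exact ⟨hF₁' t (le_trans (le_max_left _ _) ht), hF₂' t (le_trans (le_max_right _ _) ht)⟩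
end

section
/- There exists T₄ ≥ T₃ such that for all t ≥ T₄ one has (F₁'(t) + F₁(t)) · F₂'(t) ≥ (k₂/(2(p+1))) (t+R)^{-α₂} F₂(t)^{p+1}. -/
open Real Set

/-- (F₁' + F₁)·F₂' lower bound for large times. -/
theorem stmt_1
    (p q α₁ α₂ β₁ β₂ β₃ k₀ k₂ k₃ k₄ R T₃ : ℝ)
    (hp : 1 < p) (hq : 1 < q)
    (hα₂ : 0 ≤ α₂) (hβ₂ : 0 ≤ β₂) (hβ₃ : 0 ≤ β₃)
    (hα₁ : 0 < α₁) (hβ₁ : 0 < β₁)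
    (hk₀ : 0 < k₀) (hk₂ : 0 < k₂) (hk₃ : 0 < k₃) (hk₄ : 0 < k₄)
    (hR : 0 < R) (hT₃ : 0 < T₃)
    (F₁ F₂ : ℝ → ℝ)
    (hF₁ : ContDiffOn ℝ 2 F₁ (Ici T₃)) (hF₂ : ContDiffOn ℝ 2 F₂ (Ici T₃))
    (h1 : ∀ t, T₃ ≤ t → k₀ * (t + R) ^ α₁ ≤ F₁ t)
    (h1' : ∀ t, T₃ ≤ t → 0 ≤ deriv F₁ t)
    (h2 : ∀ t, T₃ ≤ t →
      k₂ * (t + R) ^ (-α₂) * (F₂ t) ^ p ≤ deriv (deriv F₁) t + deriv F₁ t)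
    (h3 : ∀ t, T₃ ≤ t → k₃ * (t + R) ^ β₁ ≤ F₂ t)
    (h3' : ∀ t, T₃ ≤ t → 0 ≤ deriv F₂ t)
    (h4 : ∀ t, T₃ ≤ t →
      k₄ * Real.exp (-β₃ * t) * (t + R) ^ (-β₂) * (F₁ t) ^ q ≤ deriv (deriv F₂) t) :
    ∃ T₄, T₃ ≤ T₄ ∧ ∀ t, T₄ ≤ t →
      k₂ / (2 * (p + 1)) * (t + R) ^ (-α₂) * (F₂ t) ^ (p + 1) ≤
        (deriv F₁ t + F₁ t) * deriv F₂ t := by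
  have hp1 : (0:ℝ) < p + 1 := by linarith
  have hRt : ∀ t : ℝ, T₃ ≤ t → 0 < t + R := fun t ht => by linarith
  have hF₂pos : ∀ t : ℝ, T₃ ≤ t → 0 < F₂ t := by
    intro t ht
    have h := h3 t ht
    have h' : 0 < k₃ * (t + R) ^ β₁ := by
      have := hRt t ht; positivity
    linarith
  have hF₁pos : ∀ t : ℝ, T₃ ≤ t → 0 < F₁ t := by
    intro t ht
    have h := h1 t ht
    have h' : 0 < k₀ * (t + R) ^ α₁ := by
      have := hRt t ht; positivity
    linarith
  have hF₂'' : ∀ t : ℝ, T₃ ≤ t → 0 < deriv (deriv F₂) t := by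
    intro t ht
    refine lt_of_lt_of_le ?_ (h4 t ht)
    have ha := hRt t ht
    have hb := hF₁pos t ht
    positivity
  -- smoothness facts
  have hF₁o : ContDiffOn ℝ 2 F₁ (Ioi T₃) := hF₁.mono Ioi_subset_Ici_self
  have hF₂o : ContDiffOn ℝ 2 F₂ (Ioi T₃) := hF₂.mono Ioi_subset_Ici_self
  have hdF₁ : ContDiffOn ℝ 1 (deriv F₁) (Ioi T₃) :=
    hF₁o.deriv_of_isOpen isOpen_Ioi (by norm_num)
  have hdF₂ : ContDiffOn ℝ 1 (deriv F₂) (Ioi T₃) :=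
    hF₂o.deriv_of_isOpen isOpen_Ioi (by norm_num)
  have hdaF₁ : ∀ t ∈ Ioi T₃, DifferentiableAt ℝ F₁ t := fun t ht =>
    (hF₁o.differentiableOn two_ne_zero).differentiableAt (Ioi_mem_nhds ht)
  have hdaF₂ : ∀ t ∈ Ioi T₃, DifferentiableAt ℝ F₂ t := fun t ht =>
    (hF₂o.differentiableOn two_ne_zero).differentiableAt (Ioi_mem_nhds ht)
  have hdadF₁ : ∀ t ∈ Ioi T₃, DifferentiableAt ℝ (deriv F₁) t := fun t ht =>
    (hdF₁.differentiableOn one_ne_zero).differentiableAt (Ioi_mem_nhds ht)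
  have hdadF₂ : ∀ t ∈ Ioi T₃, DifferentiableAt ℝ (deriv F₂) t := fun t ht =>
    (hdF₂.differentiableOn one_ne_zero).differentiableAt (Ioi_mem_nhds ht)
  -- F₂' has a positive value at T₀ := T₃ + 1 and is nondecreasing after
  set T₀ : ℝ := T₃ + 1 with hT₀def
  have hT₀gt : T₃ < T₀ := by simp [hT₀def]
  have hT' : T₃ < T₃ + 2⁻¹ := by norm_num
  have hT'lt : T₃ + 2⁻¹ < T₀ := by simp [hT₀def]; norm_num
  obtain ⟨ξ, hξ, hξeq⟩ := exists_deriv_eq_slope (deriv F₂) hT'lt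
    (hdF₂.continuousOn.mono (fun x hx => lt_of_lt_of_le hT' hx.1))
    ((hdF₂.differentiableOn one_ne_zero).mono (fun x hx => lt_trans hT' hx.1))
  set c : ℝ := deriv F₂ T₀ with hcdef
  have hc : 0 < c := by
    have hξT : T₃ ≤ ξ := le_of_lt (lt_trans hT' hξ.1)
    have h5 := hF₂'' ξ hξT
    have h6 := h3' (T₃ + 2⁻¹) (le_of_lt hT')
    have hΔ : T₀ - (T₃ + 2⁻¹) = 2⁻¹ := by simp [hT₀def]; norm_num
    rw [hΔ] at hξeq
    have : c - deriv F₂ (T₃ + 2⁻¹) = deriv (deriv F₂) ξ * 2⁻¹ := by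
      field_simp at hξeq ⊢; linarith
    linarith
  have hmono₂ : ∀ t : ℝ, T₀ ≤ t → c ≤ deriv F₂ t := by
    have hm : MonotoneOn (deriv F₂) (Ici T₀) := by
      apply monotoneOn_of_deriv_nonneg (convex_Ici T₀)
      · exact hdF₂.continuousOn.mono (fun x hx => lt_of_lt_of_le hT₀gt hx)
      · rw [interior_Ici]
        exact (hdF₂.differentiableOn one_ne_zero).mono
          (fun x hx => lt_trans hT₀gt hx)
      · rw [interior_Ici]
        intro x hx
        exact le_of_lt (hF₂'' x (le_of_lt (lt_trans hT₀gt hx)))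
    intro t ht
    exact hm self_mem_Ici ht ht
  -- the auxiliary function H and its derivative
  set H : ℝ → ℝ := fun t =>
    (deriv F₁ t + F₁ t) * deriv F₂ t - k₂ / (p + 1) * (t + R) ^ (-α₂) * F₂ t ^ (p + 1)
    with hHdef
  have hHderiv : ∀ t ∈ Ioi T₃, HasDerivAt H
      ((deriv (deriv F₁) t + deriv F₁ t) * deriv F₂ t
        + (deriv F₁ t + F₁ t) * deriv (deriv F₂) t
        - ((k₂ / (p + 1) * (1 * -α₂ * (t + R) ^ (-α₂ - 1))) * F₂ t ^ (p + 1)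
          + (k₂ / (p + 1) * (t + R) ^ (-α₂))
            * (deriv F₂ t * (p + 1) * F₂ t ^ (p + 1 - 1)))) t := by
    intro t ht
    have htT : T₃ ≤ t := le_of_lt ht
    have hA : HasDerivAt (fun s => deriv F₁ s + F₁ s)
        (deriv (deriv F₁) t + deriv F₁ t) t :=
      ((hdadF₁ t ht).hasDerivAt).add ((hdaF₁ t ht).hasDerivAt)
    have hB : HasDerivAt (deriv F₂) (deriv (deriv F₂) t) t :=
      (hdadF₂ t ht).hasDerivAt
    have hpow : HasDerivAt (fun s : ℝ => (s + R) ^ (-α₂))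
        (1 * -α₂ * (t + R) ^ (-α₂ - 1)) t := by
      exact ((hasDerivAt_id t).add_const R).rpow_const (Or.inl (hRt t htT).ne')
    have hpowc : HasDerivAt (fun s : ℝ => k₂ / (p + 1) * (s + R) ^ (-α₂))
        (k₂ / (p + 1) * (1 * -α₂ * (t + R) ^ (-α₂ - 1))) t := hpow.const_mul _
    have hpowF₂ : HasDerivAt (fun s => F₂ s ^ (p + 1))
        (deriv F₂ t * (p + 1) * F₂ t ^ (p + 1 - 1)) t :=
      ((hdaF₂ t ht).hasDerivAt).rpow_const (Or.inl (hF₂pos t htT).ne')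
    exact (hA.mul hB).sub (hpowc.mul hpowF₂)
  have hHd0 : ∀ t ∈ Ioi T₃, 0 ≤
      ((deriv (deriv F₁) t + deriv F₁ t) * deriv F₂ t
        + (deriv F₁ t + F₁ t) * deriv (deriv F₂) t
        - ((k₂ / (p + 1) * (1 * -α₂ * (t + R) ^ (-α₂ - 1))) * F₂ t ^ (p + 1)
          + (k₂ / (p + 1) * (t + R) ^ (-α₂))
            * (deriv F₂ t * (p + 1) * F₂ t ^ (p + 1 - 1)))) := by
    intro t ht
    have htT : T₃ ≤ t := le_of_lt ht
    have hR' := hRt t htT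
    have hF2 := hF₂pos t htT
    have hF1 := hF₁pos t htT
    have hd2 := h3' t htT
    have hd1 := h1' t htT
    have t1 : k₂ * (t + R) ^ (-α₂) * F₂ t ^ p * deriv F₂ t ≤
        (deriv (deriv F₁) t + deriv F₁ t) * deriv F₂ t :=
      mul_le_mul_of_nonneg_right (h2 t htT) hd2
    have t2 : 0 ≤ (deriv F₁ t + F₁ t) * deriv (deriv F₂) t :=
      mul_nonneg (by linarith) (le_of_lt (hF₂'' t htT))
    have t3 : (k₂ / (p + 1) * (t + R) ^ (-α₂))
        * (deriv F₂ t * (p + 1) * F₂ t ^ (p + 1 - 1))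
        = k₂ * (t + R) ^ (-α₂) * F₂ t ^ p * deriv F₂ t := by
      rw [show p + 1 - 1 = p by ring]
      field_simp
    have t4 : (k₂ / (p + 1) * (1 * -α₂ * (t + R) ^ (-α₂ - 1))) * F₂ t ^ (p + 1)
        = -((k₂ / (p + 1) * (α₂ * (t + R) ^ (-α₂ - 1))) * F₂ t ^ (p + 1)) := by
      ring
    have t5 : 0 ≤ (k₂ / (p + 1) * (α₂ * (t + R) ^ (-α₂ - 1))) * F₂ t ^ (p + 1) := by
      positivity
    rw [t3, t4]
    linarith
  -- H is monotone on Ici T₀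
  have hHmono : MonotoneOn H (Ici T₀) := by
    apply monotoneOn_of_deriv_nonneg (convex_Ici T₀)
    · -- continuity
      apply ContinuousOn.sub
      · exact ((hdF₁.continuousOn.mono (fun x hx => lt_of_lt_of_le hT₀gt hx)).add
          ((hF₁.continuousOn).mono (fun x (hx : T₀ ≤ x) => le_trans (le_of_lt hT₀gt) hx))).mul
          (hdF₂.continuousOn.mono (fun x hx => lt_of_lt_of_le hT₀gt hx))
      · apply ContinuousOn.mul
        · apply ContinuousOn.mul continuousOn_const
          apply ContinuousOn.rpow_const
          · exact (continuous_id.add continuous_const).continuousOn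
          · intro x hx
            exact Or.inl (hRt x (le_trans (le_of_lt hT₀gt) hx)).ne'
        · apply ContinuousOn.rpow_const
          · exact (hF₂.continuousOn).mono (fun x (hx : T₀ ≤ x) => le_trans (le_of_lt hT₀gt) hx)
          · intro x hx
            exact Or.inl (hF₂pos x (le_trans (le_of_lt hT₀gt) hx)).ne'
    · rw [interior_Ici]
      intro x hx
      exact ((hHderiv x (lt_trans hT₀gt hx)).differentiableAt).differentiableWithinAt
    · rw [interior_Ici]
      intro x hx
      have hx' : x ∈ Ioi T₃ := lt_trans hT₀gt hx
      rw [(hHderiv x hx').deriv]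
      exact hHd0 x hx'
  -- choose T₄
  set C : ℝ := max 0 (-(H T₀)) with hCdef
  have hC0 : 0 ≤ C := le_max_left _ _
  have hHT₀ : -C ≤ H T₀ := by
    have : -(H T₀) ≤ C := le_max_right _ _
    linarith
  set X : ℝ := (2 * C / (k₀ * c) + 1) ^ (α₁⁻¹) with hXdef
  have hbase : (0:ℝ) < 2 * C / (k₀ * c) + 1 := by positivity
  have hX0 : 0 ≤ X := by positivity
  have hXpow : X ^ α₁ = 2 * C / (k₀ * c) + 1 := by
    rw [hXdef, ← Real.rpow_mul (le_of_lt hbase), inv_mul_cancel₀ hα₁.ne', Real.rpow_one]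
  refine ⟨max T₀ X, le_trans (le_of_lt hT₀gt) (le_max_left _ _), ?_⟩
  intro t ht
  have htT₀ : T₀ ≤ t := le_trans (le_max_left _ _) ht
  have htT₃ : T₃ ≤ t := le_trans (le_of_lt hT₀gt) htT₀
  have hR' := hRt t htT₃
  -- pointwise bound from below by 2C
  have hXt : X ≤ t + R := by
    have : X ≤ t := le_trans (le_max_right _ _) ht
    linarith
  have hpow₁ : 2 * C / (k₀ * c) ≤ (t + R) ^ α₁ := by
    have h := Real.rpow_le_rpow hX0 hXt (le_of_lt hα₁)
    rw [hXpow] at h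
    linarith
  have hL2C : 2 * C ≤ (deriv F₁ t + F₁ t) * deriv F₂ t := by
    have hc' : c ≤ deriv F₂ t := hmono₂ t htT₀
    have hF1b : k₀ * (t + R) ^ α₁ ≤ F₁ t := h1 t htT₃
    have h0 : k₀ * (2 * C / (k₀ * c)) * c ≤ k₀ * (t + R) ^ α₁ * c := by
      have := mul_le_mul_of_nonneg_left hpow₁ (le_of_lt hk₀)
      exact mul_le_mul_of_nonneg_right this (le_of_lt hc)
    have h0' : k₀ * (2 * C / (k₀ * c)) * c = 2 * C := by
      field_simp
    have h1b : k₀ * (t + R) ^ α₁ * c ≤ F₁ t * deriv F₂ t := by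
      apply mul_le_mul hF1b hc' (le_of_lt hc)
      exact le_of_lt (hF₁pos t htT₃)
    have h2b : F₁ t * deriv F₂ t ≤ (deriv F₁ t + F₁ t) * deriv F₂ t := by
      apply mul_le_mul_of_nonneg_right _ (h3' t htT₃)
      have := h1' t htT₃; linarith
    linarith
  -- bound from H monotonicity
  have hHt : -C ≤ H t := le_trans hHT₀ (hHmono self_mem_Ici htT₀ htT₀)
  have hA0 : 0 ≤ k₂ / (p + 1) * (t + R) ^ (-α₂) * F₂ t ^ (p + 1) := by
    have := hF₂pos t htT₃
    positivity
  have hkey : k₂ / (2 * (p + 1)) * (t + R) ^ (-α₂) * F₂ t ^ (p + 1)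
      = (k₂ / (p + 1) * (t + R) ^ (-α₂) * F₂ t ^ (p + 1)) / 2 := by
    rw [show k₂ / (2 * (p + 1)) = k₂ / (p + 1) / 2 by rw [div_div, mul_comm]]
    ring
  have hHt' : (deriv F₁ t + F₁ t) * deriv F₂ t
      ≥ k₂ / (p + 1) * (t + R) ^ (-α₂) * F₂ t ^ (p + 1) - C := by
    have h9 : -C ≤ (deriv F₁ t + F₁ t) * deriv F₂ t
        - k₂ / (p + 1) * (t + R) ^ (-α₂) * F₂ t ^ (p + 1) := hHt
    linarith
  rw [hkey]
  linarith
end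

section
/- There exists T₅ ≥ T₃ such that for all t ≥ T₅ one has e^t F₁(t) (F₂'(t))² ≥ (k₂/(4(p+1)(p+2))) (t+R)^{-α₂} F₂(t)^{p+2}. -/
open Real Set

lemma monoAux {f f' : ℝ → ℝ} {a : ℝ} (hd : ∀ t ∈ Ici a, HasDerivAt f (f' t) t)
    (h0 : ∀ t ∈ Ici a, 0 ≤ f' t) : MonotoneOn f (Ici a) := by
  apply monotoneOn_of_deriv_nonneg (convex_Ici a)
  · exact fun t ht => (hd t ht).continuousAt.continuousWithinAt
  · intro t ht
    rw [interior_Ici] at ht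
    exact ((hd t (show a ≤ t from le_of_lt ht)).differentiableAt).differentiableWithinAt
  · intro t ht
    rw [interior_Ici] at ht
    rw [(hd t (show a ≤ t from le_of_lt ht)).deriv]
    exact h0 t (show a ≤ t from le_of_lt ht)

lemma secondDerivAux {F : ℝ → ℝ} {a t : ℝ} (hF : ContDiffOn ℝ 2 F (Ici a)) (ht : a < t) :
    HasDerivAt (deriv F) (deriv (deriv F) t) t := by
  have h1 : ContDiffAt ℝ 2 F t := hF.contDiffAt (Ici_mem_nhds ht)
  obtain ⟨u, hu, hcu⟩ := h1.contDiffOn le_rfl (by simp)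
  have htu : t ∈ interior u := mem_interior_iff_mem_nhds.2 hu
  have hcv : ContDiffOn ℝ 2 F (interior u) := hcu.mono interior_subset
  have hdv : ContDiffOn ℝ 1 (deriv F) (interior u) := by
    have := hcv.deriv_of_isOpen (m := 1) isOpen_interior (by norm_num)
    exact this
  exact ((hdv.differentiableOn one_ne_zero).differentiableAt
    (isOpen_interior.mem_nhds htu)).hasDerivAt

set_option maxHeartbeats 2000000 in
/-- Lower bound for e^t F₁ (F₂')² for large times. -/
theorem stmt_2
    (p q α₁ α₂ β₁ β₂ β₃ k₀ k₂ k₃ k₄ R T₃ : ℝ)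
    (hp : 1 < p) (hq : 1 < q)
    (hα₂ : 0 ≤ α₂) (hβ₂ : 0 ≤ β₂) (hβ₃ : 0 ≤ β₃)
    (hα₁ : 0 < α₁) (hβ₁ : 0 < β₁)
    (hk₀ : 0 < k₀) (hk₂ : 0 < k₂) (hk₃ : 0 < k₃) (hk₄ : 0 < k₄)
    (hR : 0 < R) (hT₃ : 0 < T₃)
    (F₁ F₂ : ℝ → ℝ)
    (hF₁ : ContDiffOn ℝ 2 F₁ (Ici T₃)) (hF₂ : ContDiffOn ℝ 2 F₂ (Ici T₃))
    (h1 : ∀ t, T₃ ≤ t → k₀ * (t + R) ^ α₁ ≤ F₁ t)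
    (h1' : ∀ t, T₃ ≤ t → 0 ≤ deriv F₁ t)
    (h2 : ∀ t, T₃ ≤ t →
      k₂ * (t + R) ^ (-α₂) * (F₂ t) ^ p ≤ deriv (deriv F₁) t + deriv F₁ t)
    (h3 : ∀ t, T₃ ≤ t → k₃ * (t + R) ^ β₁ ≤ F₂ t)
    (h3' : ∀ t, T₃ ≤ t → 0 ≤ deriv F₂ t)
    (h4 : ∀ t, T₃ ≤ t →
      k₄ * Real.exp (-β₃ * t) * (t + R) ^ (-β₂) * (F₁ t) ^ q ≤ deriv (deriv F₂) t) :
    ∃ T₅, T₃ ≤ T₅ ∧ ∀ t, T₅ ≤ t →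
      k₂ / (4 * (p + 1) * (p + 2)) * (t + R) ^ (-α₂) * (F₂ t) ^ (p + 2) ≤
        Real.exp t * F₁ t * (deriv F₂ t) ^ (2 : ℕ) := by
  have hp1 : (0:ℝ) < p + 1 := by linarith
  have hp2 : (0:ℝ) < p + 2 := by linarith
  set T' : ℝ := T₃ + 1 with hT'def
  have hT3T' : T₃ < T' := by simp [hT'def]
  have hT'pos : 0 < T' := by simp [hT'def]; linarith
  have htR : ∀ t : ℝ, T₃ ≤ t → 0 < t + R := fun t ht => by linarith
  have hF₂pos : ∀ t, T₃ ≤ t → 0 < F₂ t := fun t ht =>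
    lt_of_lt_of_le (mul_pos hk₃ (Real.rpow_pos_of_pos (htR t ht) _)) (h3 t ht)
  have hF₁pos : ∀ t, T₃ ≤ t → 0 < F₁ t := fun t ht =>
    lt_of_lt_of_le (mul_pos hk₀ (Real.rpow_pos_of_pos (htR t ht) _)) (h1 t ht)
  have hF₂'' : ∀ t, T₃ ≤ t → 0 ≤ deriv (deriv F₂) t := by
    intro t ht
    have h5 := hF₁pos t ht
    refine le_trans ?_ (h4 t ht)
    have h6 := htR t ht
    positivity
  -- derivative facts
  have hd1 : ∀ t, T₃ < t → HasDerivAt F₁ (deriv F₁ t) t := fun t ht =>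
    ((hF₁.differentiableOn (by norm_num)).differentiableAt (Ici_mem_nhds ht)).hasDerivAt
  have hd2 : ∀ t, T₃ < t → HasDerivAt F₂ (deriv F₂ t) t := fun t ht =>
    ((hF₂.differentiableOn (by norm_num)).differentiableAt (Ici_mem_nhds ht)).hasDerivAt
  have hd1' : ∀ t, T₃ < t → HasDerivAt (deriv F₁) (deriv (deriv F₁) t) t :=
    fun t ht => secondDerivAux hF₁ ht
  have hd2' : ∀ t, T₃ < t → HasDerivAt (deriv F₂) (deriv (deriv F₂) t) t :=
    fun t ht => secondDerivAux hF₂ ht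
  -- monotone F₂
  have hmono₂ : MonotoneOn F₂ (Ici T') :=
    monoAux (fun t ht => hd2 t (lt_of_lt_of_le hT3T' ht))
      (fun t ht => h3' t (le_trans hT3T'.le ht))
  set D : ℝ := F₂ T' with hDdef
  have hD : 0 < D := hF₂pos T' hT3T'.le
  have hDle : ∀ t, T' ≤ t → D ≤ F₂ t := fun t ht => hmono₂ self_mem_Ici ht ht
  have hDp1 : ∀ t, T' ≤ t → D ^ (p+1) ≤ F₂ t ^ (p+1) := fun t ht =>
    Real.rpow_le_rpow hD.le (hDle t ht) (by linarith)
  set c₁ : ℝ := k₂ / (p + 1) with hc₁def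
  have hc₁ : 0 < c₁ := div_pos hk₂ hp1
  have hc₁k : c₁ * (p + 1) = k₂ := by rw [hc₁def]; exact div_mul_cancel₀ k₂ hp1.ne'
  -- ===== Step A =====
  set A : ℝ → ℝ := fun t => Real.exp t * deriv F₁ t * deriv F₂ t -
      c₁ * ((t + R) ^ (-α₂) * (F₂ t ^ (p+1) - D ^ (p+1))) with hAdef
  set A' : ℝ → ℝ := fun t =>
      (Real.exp t * deriv F₁ t + Real.exp t * deriv (deriv F₁) t) * deriv F₂ t
        + Real.exp t * deriv F₁ t * deriv (deriv F₂) t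
        - c₁ * ((-α₂ * (t + R) ^ (-α₂ - 1)) * (F₂ t ^ (p+1) - D ^ (p+1))
          + (t + R) ^ (-α₂) * (deriv F₂ t * (p+1) * F₂ t ^ (p+1-1))) with hA'def
  have hA'd : ∀ t ∈ Ici T', HasDerivAt A (A' t) t := by
    intro t ht
    have htT₃ : T₃ < t := lt_of_lt_of_le hT3T' ht
    have h1d := hd1 t htT₃
    have h2d := hd2 t htT₃
    have h1d' := hd1' t htT₃
    have h2d' := hd2' t htT₃
    have hexp := Real.hasDerivAt_exp t
    have hpow : HasDerivAt (fun s : ℝ => (s + R) ^ (-α₂))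
        (1 * (-α₂) * (t + R) ^ (-α₂ - 1)) t :=
      ((hasDerivAt_id t).add_const R).rpow_const (Or.inl (ne_of_gt (htR t htT₃.le)))
    have hFp : HasDerivAt (fun s => F₂ s ^ (p+1))
        (deriv F₂ t * (p+1) * F₂ t ^ (p+1-1)) t :=
      h2d.rpow_const (Or.inl (ne_of_gt (hF₂pos t htT₃.le)))
    have hcomb := ((hexp.mul h1d').mul h2d').sub
      (((hpow.mul (hFp.sub_const (D ^ (p+1))))).const_mul c₁)
    rw [hAdef, hA'def]
    refine hcomb.congr_deriv ?_
    simp only [Pi.mul_apply]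
    ring
  have hA'nonneg : ∀ t ∈ Ici T', 0 ≤ A' t := by
    intro t ht
    have htT₃ : T₃ ≤ t := le_trans hT3T'.le ht
    have htpos : 0 < t := lt_of_lt_of_le hT'pos ht
    have he : 1 ≤ Real.exp t := Real.one_le_exp htpos.le
    have he0 : 0 < Real.exp t := Real.exp_pos t
    have hF2' := h3' t htT₃
    have hF1' := h1' t htT₃
    have hF2'' := hF₂'' t htT₃
    have hh2 := h2 t htT₃
    have hP : 0 < (t + R) ^ (-α₂) := Real.rpow_pos_of_pos (htR t htT₃) _
    have hP1 : 0 < (t + R) ^ (-α₂ - 1) := Real.rpow_pos_of_pos (htR t htT₃) _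
    have hFp2 : 0 < F₂ t ^ p := Real.rpow_pos_of_pos (hF₂pos t htT₃) _
    have hD1 : D ^ (p+1) ≤ F₂ t ^ (p+1) := hDp1 t ht
    have hrw : F₂ t ^ (p+1-1) = F₂ t ^ p := by congr 1; ring
    rw [hA'def]
    simp only [hrw]
    have e1 : k₂ * ((t + R) ^ (-α₂) * (F₂ t ^ p * deriv F₂ t)) ≤
        Real.exp t * (deriv (deriv F₁) t + deriv F₁ t) * deriv F₂ t := by
      have h5 : k₂ * (t + R) ^ (-α₂) * F₂ t ^ p ≤
          Real.exp t * (deriv (deriv F₁) t + deriv F₁ t) := by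
        refine le_trans hh2 ?_
        have hsum : 0 ≤ deriv (deriv F₁) t + deriv F₁ t :=
          le_trans (by positivity) hh2
        nlinarith
      calc k₂ * ((t + R) ^ (-α₂) * (F₂ t ^ p * deriv F₂ t))
          = (k₂ * (t + R) ^ (-α₂) * F₂ t ^ p) * deriv F₂ t := by ring
        _ ≤ (Real.exp t * (deriv (deriv F₁) t + deriv F₁ t)) * deriv F₂ t :=
            mul_le_mul_of_nonneg_right h5 hF2'
        _ = Real.exp t * (deriv (deriv F₁) t + deriv F₁ t) * deriv F₂ t := by ring
    have e2 : 0 ≤ Real.exp t * deriv F₁ t * deriv (deriv F₂) t := by positivity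
    have e3 : 0 ≤ c₁ * (α₂ * ((t + R) ^ (-α₂ - 1) * (F₂ t ^ (p+1) - D ^ (p+1)))) := by
      have : 0 ≤ F₂ t ^ (p+1) - D ^ (p+1) := by linarith
      positivity
    have expand : (Real.exp t * deriv F₁ t + Real.exp t * deriv (deriv F₁) t) * deriv F₂ t
        + Real.exp t * deriv F₁ t * deriv (deriv F₂) t
        - c₁ * ((-α₂ * (t + R) ^ (-α₂ - 1)) * (F₂ t ^ (p+1) - D ^ (p+1))
          + (t + R) ^ (-α₂) * (deriv F₂ t * (p+1) * F₂ t ^ p))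
        = (Real.exp t * (deriv (deriv F₁) t + deriv F₁ t) * deriv F₂ t
            - k₂ * ((t + R) ^ (-α₂) * (F₂ t ^ p * deriv F₂ t)))
          + Real.exp t * deriv F₁ t * deriv (deriv F₂) t
          + c₁ * (α₂ * ((t + R) ^ (-α₂ - 1) * (F₂ t ^ (p+1) - D ^ (p+1)))) := by
      rw [← hc₁k]; ring
    rw [expand]
    linarith
  have hAmono : MonotoneOn A (Ici T') := monoAux hA'd hA'nonneg
  have hA0 : 0 ≤ A T' := by
    have hexpand : A T' = Real.exp T' * deriv F₁ T' * deriv F₂ T' -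
        c₁ * ((T' + R) ^ (-α₂) * (D ^ (p+1) - D ^ (p+1))) := rfl
    rw [hexpand, sub_self, mul_zero, mul_zero, sub_zero]
    have h7 := h1' T' hT3T'.le
    have h8 := h3' T' hT3T'.le
    exact mul_nonneg (mul_nonneg (Real.exp_pos T').le h7) h8
  have stepA : ∀ t, T' ≤ t →
      c₁ * ((t + R) ^ (-α₂) * (F₂ t ^ (p+1) - D ^ (p+1))) ≤
        Real.exp t * deriv F₁ t * deriv F₂ t := by
    intro t ht
    have h6 : 0 ≤ A t := le_trans hA0 (hAmono self_mem_Ici ht ht)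
    have hexpand : A t = Real.exp t * deriv F₁ t * deriv F₂ t -
        c₁ * ((t + R) ^ (-α₂) * (F₂ t ^ (p+1) - D ^ (p+1))) := rfl
    rw [hexpand] at h6
    linarith
  -- ===== g nonneg =====
  have hgx : ∀ x, D ≤ x →
      0 ≤ x ^ (p+2) - (p+2) * D ^ (p+1) * x + (p+1) * D ^ (p+2) := by
    have hDD : D ^ (p+1) * D = D ^ (p+2) := by
      rw [← Real.rpow_add_one hD.ne' (p+1)]
      congr 1; ring
    have hmg : MonotoneOn (fun x : ℝ => x ^ (p+2) - (p+2) * D ^ (p+1) * x + (p+1) * D ^ (p+2))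
        (Ici D) := by
      apply monoAux (f' := fun x => 1 * (p+2) * x ^ (p+2-1) - (p+2) * D ^ (p+1) * 1)
      · intro x hx
        have hx0 : 0 < x := lt_of_lt_of_le hD hx
        exact (((hasDerivAt_id x).rpow_const (Or.inl hx0.ne')).sub
          ((hasDerivAt_id x).const_mul ((p+2) * D ^ (p+1)))).add_const _
      · intro x hx
        have hx0 : 0 < x := lt_of_lt_of_le hD hx
        have hrw : x ^ (p+2-1) = x ^ (p+1) := by congr 1; ring
        rw [hrw]
        have : D ^ (p+1) ≤ x ^ (p+1) := Real.rpow_le_rpow hD.le hx (by linarith)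
        nlinarith
    intro x hx
    have h5 := hmg self_mem_Ici hx hx
    simp only at h5
    nlinarith
  -- ===== Step B =====
  set c₂ : ℝ := k₂ / ((p + 1) * (p + 2)) with hc₂def
  have hc₂ : 0 < c₂ := div_pos hk₂ (by positivity)
  have hc₂c₁ : c₂ * (p + 2) = c₁ := by
    rw [hc₂def, hc₁def]; field_simp
  set B : ℝ → ℝ := fun t => Real.exp t * F₁ t * (deriv F₂ t) ^ (2:ℕ) -
      c₂ * ((t + R) ^ (-α₂) *
        (F₂ t ^ (p+2) - (p+2) * D ^ (p+1) * F₂ t + (p+1) * D ^ (p+2))) with hBdef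
  set B' : ℝ → ℝ := fun t =>
      (Real.exp t * F₁ t + Real.exp t * deriv F₁ t) * (deriv F₂ t) ^ (2:ℕ)
        + Real.exp t * F₁ t * (2 * deriv F₂ t * deriv (deriv F₂) t)
        - c₂ * ((-α₂ * (t + R) ^ (-α₂ - 1)) *
            (F₂ t ^ (p+2) - (p+2) * D ^ (p+1) * F₂ t + (p+1) * D ^ (p+2))
          + (t + R) ^ (-α₂) * (deriv F₂ t * (p+2) * F₂ t ^ (p+2-1)
            - (p+2) * D ^ (p+1) * deriv F₂ t)) with hB'def
  have hB'd : ∀ t ∈ Ici T', HasDerivAt B (B' t) t := by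
    intro t ht
    have htT₃ : T₃ < t := lt_of_lt_of_le hT3T' ht
    have h1d := hd1 t htT₃
    have h2d := hd2 t htT₃
    have h2d' := hd2' t htT₃
    have hexp := Real.hasDerivAt_exp t
    have hpow : HasDerivAt (fun s : ℝ => (s + R) ^ (-α₂))
        (1 * (-α₂) * (t + R) ^ (-α₂ - 1)) t :=
      ((hasDerivAt_id t).add_const R).rpow_const (Or.inl (ne_of_gt (htR t htT₃.le)))
    have hsq : HasDerivAt (fun s => (deriv F₂ s) ^ (2:ℕ))
        ((2:ℕ) * (deriv F₂ t) ^ (2-1) * deriv (deriv F₂) t) t := h2d'.pow 2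
    have hFp : HasDerivAt (fun s => F₂ s ^ (p+2))
        (deriv F₂ t * (p+2) * F₂ t ^ (p+2-1)) t :=
      h2d.rpow_const (Or.inl (ne_of_gt (hF₂pos t htT₃.le)))
    have hlin : HasDerivAt (fun s => (p+2) * D ^ (p+1) * F₂ s)
        ((p+2) * D ^ (p+1) * deriv F₂ t) t := h2d.const_mul _
    have hcomb := ((hexp.mul h1d).mul hsq).sub
      ((hpow.mul ((hFp.sub hlin).add_const ((p+1) * D ^ (p+2)))).const_mul c₂)
    rw [hBdef, hB'def]
    refine hcomb.congr_deriv ?_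
    simp only [Pi.mul_apply, Pi.sub_apply]
    push_cast
    ring
  have hB'nonneg : ∀ t ∈ Ici T', 0 ≤ B' t := by
    intro t ht
    have htT₃ : T₃ ≤ t := le_trans hT3T'.le ht
    have he0 : 0 < Real.exp t := Real.exp_pos t
    have hF2' := h3' t htT₃
    have hF1' := h1' t htT₃
    have hF2'' := hF₂'' t htT₃
    have hF1p := hF₁pos t htT₃
    have hP : 0 < (t + R) ^ (-α₂) := Real.rpow_pos_of_pos (htR t htT₃) _
    have hP1 : 0 < (t + R) ^ (-α₂ - 1) := Real.rpow_pos_of_pos (htR t htT₃) _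
    have hgnn : 0 ≤ F₂ t ^ (p+2) - (p+2) * D ^ (p+1) * F₂ t + (p+1) * D ^ (p+2) :=
      hgx (F₂ t) (hDle t ht)
    have hrw : F₂ t ^ (p+2-1) = F₂ t ^ (p+1) := by congr 1; ring
    rw [hB'def]
    simp only [hrw]
    have e6 : c₁ * ((t + R) ^ (-α₂) * (F₂ t ^ (p+1) - D ^ (p+1))) * deriv F₂ t ≤
        Real.exp t * deriv F₁ t * deriv F₂ t * deriv F₂ t :=
      mul_le_mul_of_nonneg_right (stepA t ht) hF2'
    have e4 : 0 ≤ Real.exp t * F₁ t * (deriv F₂ t) ^ (2:ℕ) := by positivity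
    have e7 : 0 ≤ Real.exp t * F₁ t * (2 * deriv F₂ t * deriv (deriv F₂) t) := by positivity
    have e8 : 0 ≤ c₂ * (α₂ * ((t + R) ^ (-α₂ - 1) *
        (F₂ t ^ (p+2) - (p+2) * D ^ (p+1) * F₂ t + (p+1) * D ^ (p+2)))) := by positivity
    have expand : (Real.exp t * F₁ t + Real.exp t * deriv F₁ t) * (deriv F₂ t) ^ (2:ℕ)
        + Real.exp t * F₁ t * (2 * deriv F₂ t * deriv (deriv F₂) t)
        - c₂ * ((-α₂ * (t + R) ^ (-α₂ - 1)) *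
            (F₂ t ^ (p+2) - (p+2) * D ^ (p+1) * F₂ t + (p+1) * D ^ (p+2))
          + (t + R) ^ (-α₂) * (deriv F₂ t * (p+2) * F₂ t ^ (p+1)
            - (p+2) * D ^ (p+1) * deriv F₂ t))
        = Real.exp t * F₁ t * (deriv F₂ t) ^ (2:ℕ)
          + (Real.exp t * deriv F₁ t * deriv F₂ t * deriv F₂ t
            - c₁ * ((t + R) ^ (-α₂) * (F₂ t ^ (p+1) - D ^ (p+1))) * deriv F₂ t)
          + Real.exp t * F₁ t * (2 * deriv F₂ t * deriv (deriv F₂) t)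
          + c₂ * (α₂ * ((t + R) ^ (-α₂ - 1) *
            (F₂ t ^ (p+2) - (p+2) * D ^ (p+1) * F₂ t + (p+1) * D ^ (p+2)))) := by
      rw [← hc₂c₁]; ring
    rw [expand]
    linarith
  have hBmono : MonotoneOn B (Ici T') := monoAux hB'd hB'nonneg
  have hDD : D ^ (p+1) * D = D ^ (p+2) := by
    rw [← Real.rpow_add_one hD.ne' (p+1)]
    congr 1; ring
  have hB0 : 0 ≤ B T' := by
    have hz : D ^ (p+2) - (p+2) * D ^ (p+1) * D + (p+1) * D ^ (p+2) = 0 := by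
      linear_combination (-(p+2)) * hDD
    have hexpand : B T' = Real.exp T' * F₁ T' * (deriv F₂ T') ^ (2:ℕ) -
        c₂ * ((T' + R) ^ (-α₂) *
          (D ^ (p+2) - (p+2) * D ^ (p+1) * D + (p+1) * D ^ (p+2))) := rfl
    rw [hexpand, hz]
    simp only [mul_zero, sub_zero]
    have h7 := hF₁pos T' hT3T'.le
    exact mul_nonneg (mul_nonneg (Real.exp_pos T').le h7.le) (sq_nonneg _)
  have stepB : ∀ t, T' ≤ t →
      c₂ * ((t + R) ^ (-α₂) *
        (F₂ t ^ (p+2) - (p+2) * D ^ (p+1) * F₂ t + (p+1) * D ^ (p+2))) ≤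
        Real.exp t * F₁ t * (deriv F₂ t) ^ (2:ℕ) := by
    intro t ht
    have h6 : 0 ≤ B t := le_trans hB0 (hBmono self_mem_Ici ht ht)
    have hexpand : B t = Real.exp t * F₁ t * (deriv F₂ t) ^ (2:ℕ) -
        c₂ * ((t + R) ^ (-α₂) *
          (F₂ t ^ (p+2) - (p+2) * D ^ (p+1) * F₂ t + (p+1) * D ^ (p+2))) := rfl
    rw [hexpand] at h6
    linarith
  -- ===== choose T₅ =====
  set X₀ : ℝ := (4/3 * (p+2)) ^ (1/(p+1)) * D with hX₀def
  have hX₀ : 0 < X₀ := by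
    apply mul_pos _ hD
    exact Real.rpow_pos_of_pos (by linarith) _
  set Z : ℝ := (X₀ / k₃) ^ (1/β₁) with hZdef
  have hZ0 : 0 ≤ Z := (Real.rpow_pos_of_pos (div_pos hX₀ hk₃) _).le
  refine ⟨max T' Z, le_trans (by linarith) (le_max_left _ _), ?_⟩
  intro t ht
  have htT' : T' ≤ t := le_trans (le_max_left _ _) ht
  have htT₃ : T₃ ≤ t := le_trans hT3T'.le htT'
  have htZ : Z ≤ t := le_trans (le_max_right _ _) ht
  have htRZ : Z ≤ t + R := by linarith
  have hF2tpos := hF₂pos t htT₃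
  have hP : 0 < (t + R) ^ (-α₂) := Real.rpow_pos_of_pos (htR t htT₃) _
  have h9 : X₀ / k₃ ≤ (t + R) ^ β₁ := by
    have h10 : ((X₀ / k₃) ^ (1/β₁)) ^ β₁ = X₀ / k₃ := by
      rw [← Real.rpow_mul (div_pos hX₀ hk₃).le]
      rw [one_div_mul_cancel hβ₁.ne', Real.rpow_one]
    calc X₀ / k₃ = ((X₀ / k₃) ^ (1/β₁)) ^ β₁ := h10.symm
      _ ≤ (t + R) ^ β₁ := Real.rpow_le_rpow hZ0 htRZ hβ₁.le
  have h10 : X₀ ≤ F₂ t := by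
    refine le_trans ?_ (h3 t htT₃)
    rw [div_le_iff₀ hk₃] at h9
    linarith
  have h11 : 4/3 * (p+2) * D ^ (p+1) ≤ F₂ t ^ (p+1) := by
    have h12 : X₀ ^ (p+1) ≤ F₂ t ^ (p+1) := Real.rpow_le_rpow hX₀.le h10 (by linarith)
    have h13 : X₀ ^ (p+1) = 4/3 * (p+2) * D ^ (p+1) := by
      rw [hX₀def, Real.mul_rpow (by positivity) hD.le, ← Real.rpow_mul (by linarith)]
      rw [one_div_mul_cancel hp1.ne', Real.rpow_one]
    linarith [h13 ▸ h12]
  have hf2 : F₂ t ^ (p+1) * F₂ t = F₂ t ^ (p+2) := by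
    rw [← Real.rpow_add_one hF2tpos.ne' (p+1)]
    congr 1; ring
  have hkey : (p+2) * D ^ (p+1) * F₂ t ≤ 3/4 * F₂ t ^ (p+2) := by
    have h14 := mul_le_mul_of_nonneg_right h11 hF2tpos.le
    rw [hf2] at h14
    linarith
  have hD2nn : 0 ≤ (p+1) * D ^ (p+2) := by positivity
  have h15 : 1/4 * F₂ t ^ (p+2) ≤
      F₂ t ^ (p+2) - (p+2) * D ^ (p+1) * F₂ t + (p+1) * D ^ (p+2) := by linarith
  have h16 : c₂ * ((t + R) ^ (-α₂) * (1/4 * F₂ t ^ (p+2))) ≤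
      c₂ * ((t + R) ^ (-α₂) *
        (F₂ t ^ (p+2) - (p+2) * D ^ (p+1) * F₂ t + (p+1) * D ^ (p+2))) := by
    apply mul_le_mul_of_nonneg_left _ hc₂.le
    exact mul_le_mul_of_nonneg_left h15 hP.le
  have hfinal : k₂ / (4 * (p + 1) * (p + 2)) * (t + R) ^ (-α₂) * F₂ t ^ (p+2)
      = c₂ * ((t + R) ^ (-α₂) * (1/4 * F₂ t ^ (p+2))) := by
    rw [hc₂def]
    field_simp
  rw [hfinal]
  exact le_trans h16 (stepB t htT')
end

section
/- There exists T₆ ≥ T₃ such that for all t ≥ T₆ one has F₂'(t) ≥ k₅^{1/(2(q+1))} · e^{-((q+β₃)/(2(q+1))) t} · (t+R)^{-(β₂+α₂q)/(2(q+1))} · F₂(t)^{((p+2)q+1)/(2(q+1))}, where k₅ := (2q+1) k₂^q k₄ / (2((p+2)q+1)(4(p+1)(p+2))^q). -/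
open Real Set

private lemma mono_aux' {f f' : ℝ → ℝ} {a b : ℝ} (hab : a ≤ b)
    (hd : ∀ s ∈ Icc a b, HasDerivAt f (f' s) s)
    (h0 : ∀ s ∈ Icc a b, 0 ≤ f' s) : f a ≤ f b := by
  have hmono := monotoneOn_of_deriv_nonneg (convex_Icc a b)
    (fun s hs => (hd s hs).continuousAt.continuousWithinAt)
    (fun s hs => ((hd s (interior_subset hs)).differentiableAt).differentiableWithinAt)
    (fun s hs => by rw [(hd s (interior_subset hs)).deriv]; exact h0 s (interior_subset hs))
  exact hmono (left_mem_Icc.2 hab) (right_mem_Icc.2 hab) hab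

private lemma exp_aux {d : ℝ} (hd : 0 ≤ d) : d * d / (2 + d) ≤ d - 1 + Real.exp (-d) := by
  have key : 0 ≤ d - 2 + (2 + d) * Real.exp (-d) := by
    have h0 : (0:ℝ) - 2 + (2 + 0) * Real.exp (-0) = 0 := by simp
    have hm : (0:ℝ) - 2 + (2 + 0) * Real.exp (-0) ≤ d - 2 + (2 + d) * Real.exp (-d) := by
      apply mono_aux' (f := fun x : ℝ => x - 2 + (2 + x) * Real.exp (-x)) (f' := fun s => 1 - (1 + s) * Real.exp (-s)) hd
      · intro s _
        have h1 : HasDerivAt (fun x : ℝ => Real.exp (-x)) (-Real.exp (-s)) s := by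
          simpa using ((hasDerivAt_id s).neg.exp)
        have h2 : HasDerivAt (fun x : ℝ => x - 2 + (2 + x) * Real.exp (-x))
            (1 + ((1 : ℝ) * Real.exp (-s) + (2 + s) * (-Real.exp (-s)))) s := by
          have h5 := (((hasDerivAt_id s).sub_const 2).fun_add
            (((hasDerivAt_const s (2:ℝ)).fun_add (hasDerivAt_id s)).fun_mul h1))
          simpa using h5
        convert h2 using 1; ring
      · intro s hs
        have h3 : s + 1 ≤ Real.exp s := Real.add_one_le_exp s
        have h4 : Real.exp (-s) * Real.exp s = 1 := by
          rw [← Real.exp_add]; simp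
        nlinarith [Real.exp_pos (-s), Real.exp_pos s, hs.1]
    linarith
  have h2d : (0:ℝ) < 2 + d := by linarith
  rw [div_le_iff₀ h2d]
  nlinarith [key]

private lemma exp_rpow' (x y : ℝ) : (Real.exp x) ^ y = Real.exp (x * y) := by
  rw [Real.rpow_def_of_pos (Real.exp_pos x), Real.log_exp]

private lemma heq_aux {p k₂ w X D E : ℝ} (hX : 0 < X) (hD : 0 < D) (hE : 0 < E)
    (hp0 : 0 < p) :
    k₂ * w * (X/2)^p * (X/(2*D) * (X/(2*D)) * ((2:ℝ)^p/((p+1)*(p+2))) / E) * (D*D)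
      = k₂/(4*(p+1)*(p+2)) * E⁻¹ * w * X^(p+2) := by
  have e4 : (X/2)^p = X^p/(2:ℝ)^p := Real.div_rpow hX.le (by norm_num) p
  have e5 : X^(p+2) = X^p * (X*X) := by
    rw [Real.rpow_add hX p 2]
    congr 1
    rw [show (2:ℝ) = ((2:ℕ):ℝ) by norm_num, Real.rpow_natCast]
    ring
  rw [e4, e5]
  have h2p : ((2:ℝ)^p) ≠ 0 := by positivity
  have hp1 : (p+1) ≠ 0 := by linarith
  have hp2 : (p+2) ≠ 0 := by linarith
  have hD' : D ≠ 0 := ne_of_gt hD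
  have hE' : E ≠ 0 := ne_of_gt hE
  field_simp
  ring

private lemma sq_rpow {D q : ℝ} (hD : 0 < D) : D^(2*q+2-1) = (D*D)^q * D := by
  have h2 : D*D = D^(2:ℝ) := by
    rw [show (2:ℝ) = ((2:ℕ):ℝ) by norm_num, Real.rpow_natCast]; ring
  rw [show 2*q+2-1 = 2*q+1 by ring, Real.rpow_add hD (2*q) 1, Real.rpow_one, h2,
    Real.rpow_mul hD.le 2 q]

private lemma k5_le {q K k₄ M P : ℝ} (hq : 1 < q) (hK : 0 ≤ K) (hk₄ : 0 < k₄)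
    (hM : 0 < M) (hP : 0 < P) :
    (2*q+1)*K*k₄/(2*M*P) ≤ (2*q+2)*k₄*(K/P)/M/2 := by
  have hEq : (2*q+2)*k₄*(K/P)/M/2 = (2*q+2)*K*k₄/(2*M*P) := by
    field_simp
  rw [hEq, div_le_div_iff₀ (by positivity) (by positivity)]
  nlinarith [mul_nonneg hK hk₄.le, mul_pos hM hP, mul_nonneg (mul_nonneg hK hk₄.le) (mul_pos hM hP).le]

private lemma expdom {aa bb t : ℝ} (ha : 0 < aa) (hb : 0 < bb)
    (ht1 : 4*bb + 1 ≤ t) (ht2 : 4*aa ≤ t) : aa + bb * t ≤ Real.exp t := by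
  have h0t : (0:ℝ) < t := by nlinarith
  have h5 : 1 + t/2 ≤ Real.exp (t/2) := by linarith [Real.add_one_le_exp (t/2)]
  have h6 : Real.exp (t/2) * Real.exp (t/2) = Real.exp t := by
    rw [← Real.exp_add]; ring_nf
  nlinarith [mul_le_mul h5 h5 (by linarith) (Real.exp_pos (t/2)).le, h6]

set_option maxHeartbeats 8000000 in
/-- First-order differential inequality for F₂ for large times. -/
theorem stmt_3
    (p q α₁ α₂ β₁ β₂ β₃ k₀ k₂ k₃ k₄ R T₃ : ℝ)
    (hp : 1 < p) (hq : 1 < q)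
    (hα₂ : 0 ≤ α₂) (hβ₂ : 0 ≤ β₂) (hβ₃ : 0 ≤ β₃)
    (hα₁ : 0 < α₁) (hβ₁ : 0 < β₁)
    (hk₀ : 0 < k₀) (hk₂ : 0 < k₂) (hk₃ : 0 < k₃) (hk₄ : 0 < k₄)
    (hR : 0 < R) (hT₃ : 0 < T₃)
    (F₁ F₂ : ℝ → ℝ)
    (hF₁ : ContDiffOn ℝ 2 F₁ (Ici T₃)) (hF₂ : ContDiffOn ℝ 2 F₂ (Ici T₃))
    (h1 : ∀ t, T₃ ≤ t → k₀ * (t + R) ^ α₁ ≤ F₁ t)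
    (h1' : ∀ t, T₃ ≤ t → 0 ≤ deriv F₁ t)
    (h2 : ∀ t, T₃ ≤ t →
      k₂ * (t + R) ^ (-α₂) * (F₂ t) ^ p ≤ deriv (deriv F₁) t + deriv F₁ t)
    (h3 : ∀ t, T₃ ≤ t → k₃ * (t + R) ^ β₁ ≤ F₂ t)
    (h3' : ∀ t, T₃ ≤ t → 0 ≤ deriv F₂ t)
    (h4 : ∀ t, T₃ ≤ t →
      k₄ * Real.exp (-β₃ * t) * (t + R) ^ (-β₂) * (F₁ t) ^ q ≤ deriv (deriv F₂) t) :
    ∃ T₆, T₃ ≤ T₆ ∧ ∀ t, T₆ ≤ t →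
      ((2 * q + 1) * k₂ ^ q * k₄ / (2 * ((p + 2) * q + 1) * (4 * (p + 1) * (p + 2)) ^ q))
          ^ (1 / (2 * (q + 1))) *
        Real.exp (-((q + β₃) / (2 * (q + 1))) * t) *
        (t + R) ^ (-((β₂ + α₂ * q) / (2 * (q + 1)))) *
        (F₂ t) ^ (((p + 2) * q + 1) / (2 * (q + 1))) ≤ deriv F₂ t := by
  have hq0 : (0:ℝ) < q := by linarith
  have hp0 : (0:ℝ) < p := by linarith
  -- positivity
  have htR : ∀ t, T₃ ≤ t → 0 < t + R := fun t ht => by linarith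
  have hF₂pos : ∀ t, T₃ ≤ t → 0 < F₂ t := fun t ht =>
    lt_of_lt_of_le (by have := htR t ht; positivity) (h3 t ht)
  have hF₁pos : ∀ t, T₃ ≤ t → 0 < F₁ t := fun t ht =>
    lt_of_lt_of_le (by have := htR t ht; positivity) (h1 t ht)
  -- differentiability plumbing
  have hO : IsOpen (Ioi T₃) := isOpen_Ioi
  have hF₁o : ContDiffOn ℝ 2 F₁ (Ioi T₃) := hF₁.mono Ioi_subset_Ici_self
  have hF₂o : ContDiffOn ℝ 2 F₂ (Ioi T₃) := hF₂.mono Ioi_subset_Ici_self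
  have hd1 : ∀ t, T₃ < t → HasDerivAt F₁ (deriv F₁ t) t := fun t ht =>
    ((hF₁o.differentiableOn (by norm_num)).differentiableAt (hO.mem_nhds ht)).hasDerivAt
  have hd2 : ∀ t, T₃ < t → HasDerivAt F₂ (deriv F₂ t) t := fun t ht =>
    ((hF₂o.differentiableOn (by norm_num)).differentiableAt (hO.mem_nhds ht)).hasDerivAt
  have hc1 : ContDiffOn ℝ 1 (deriv F₁) (Ioi T₃) := hF₁o.deriv_of_isOpen hO (by norm_num)
  have hc2 : ContDiffOn ℝ 1 (deriv F₂) (Ioi T₃) := hF₂o.deriv_of_isOpen hO (by norm_num)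
  have hd1' : ∀ t, T₃ < t → HasDerivAt (deriv F₁) (deriv (deriv F₁) t) t := fun t ht =>
    ((hc1.differentiableOn (by norm_num)).differentiableAt (hO.mem_nhds ht)).hasDerivAt
  have hd2' : ∀ t, T₃ < t → HasDerivAt (deriv F₂) (deriv (deriv F₂) t) t := fun t ht =>
    ((hc2.differentiableOn (by norm_num)).differentiableAt (hO.mem_nhds ht)).hasDerivAt
  -- second derivative of F₂ is nonneg, so deriv F₂ is monotone on (T₃, ∞)
  have hdd2nn : ∀ t, T₃ ≤ t → 0 ≤ deriv (deriv F₂) t := by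
    intro t ht
    refine le_trans ?_ (h4 t ht)
    have h := htR t ht
    have := (hF₁pos t ht).le
    positivity
  have hmono2' : ∀ s t, T₃ < s → s ≤ t → deriv F₂ s ≤ deriv F₂ t := by
    intro s t hs hst
    exact mono_aux' hst (fun u hu => hd2' u (lt_of_lt_of_le hs hu.1))
      (fun u hu => hdd2nn u (le_of_lt (lt_of_lt_of_le hs hu.1)))
  -- strict positivity of deriv F₂ past T₄ := T₃ + 1
  have hT₄ : T₃ < T₃ + 1 := by linarith
  have hm₀pos : 0 < deriv F₂ (T₃ + 1) := by
    obtain ⟨m, hmpos, hlow⟩ :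
        ∃ m, 0 < m ∧ ∀ u ∈ Icc (T₃ + 1/2) (T₃ + 1), m ≤ deriv (deriv F₂) u := by
      have hs₀R : 0 < T₃ + 1/2 + R := by linarith
      have htR1 : 0 < T₃ + 1 + R := by linarith
      refine ⟨k₄ * Real.exp (-β₃ * (T₃+1)) * (T₃ + 1 + R) ^ (-β₂) *
        (k₀ * (T₃ + 1/2 + R) ^ α₁) ^ q, by positivity, ?_⟩
      intro u hu
      have huT : T₃ ≤ u := by linarith [hu.1]
      have huR : 0 < u + R := htR u huT
      refine le_trans ?_ (h4 u huT)
      have e1 : Real.exp (-β₃ * (T₃+1)) ≤ Real.exp (-β₃ * u) := by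
        apply Real.exp_le_exp.2; nlinarith only [hu.2, hβ₃]
      have e2 : (T₃ + 1 + R) ^ (-β₂) ≤ (u + R) ^ (-β₂) := by
        rw [Real.rpow_neg htR1.le, Real.rpow_neg huR.le]
        apply inv_anti₀ (by positivity)
        exact Real.rpow_le_rpow huR.le (by linarith [hu.2]) hβ₂
      have e3 : (k₀ * (T₃ + 1/2 + R) ^ α₁) ^ q ≤ (F₁ u) ^ q := by
        apply Real.rpow_le_rpow (by positivity) ?_ hq0.le
        refine le_trans ?_ (h1 u huT)
        have h7 : (T₃ + 1/2 + R) ^ α₁ ≤ (u + R) ^ α₁ :=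
          Real.rpow_le_rpow hs₀R.le (by linarith [hu.1]) hα₁.le
        nlinarith only [h7, hk₀]
      have n1 : (0:ℝ) ≤ (u + R) ^ (-β₂) := by positivity
      have n2 : (0:ℝ) ≤ (k₀ * (T₃ + 1/2 + R) ^ α₁) ^ q := by positivity
      have n3 : (0:ℝ) ≤ (T₃ + 1 + R) ^ (-β₂) := by positivity
      refine mul_le_mul (mul_le_mul (mul_le_mul le_rfl e1 (Real.exp_pos _).le hk₄.le)
        e2 n3 (by positivity)) e3 n2 (by positivity)
    have key := mono_aux' (f := fun u => deriv F₂ u - m * u)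
      (f' := fun u => deriv (deriv F₂) u - m)
      (show T₃ + 1/2 ≤ T₃ + 1 by linarith)
      (fun u hu => by
        have huT : T₃ < u := by linarith [hu.1]
        simpa using (hd2' u huT).fun_sub ((hasDerivAt_id u).const_mul m))
      (fun u hu => by have := hlow u hu; linarith)
    have h6 : 0 ≤ deriv F₂ (T₃ + 1/2) := h3' _ (by linarith)
    linarith only [key, h6, hmpos]
  have hd2pos : ∀ t, T₃ + 1 ≤ t → deriv F₂ (T₃+1) ≤ deriv F₂ t :=
    fun t ht => hmono2' (T₃+1) t hT₄ ht
  -- growth bound: F₂ t ≤ F₂ (T₃+1) + (t - (T₃+1)) * deriv F₂ t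
  have hgrow : ∀ t, T₃ + 1 ≤ t → F₂ t ≤ F₂ (T₃+1) + (t - (T₃+1)) * deriv F₂ t := by
    intro t ht
    have hmono := mono_aux' (f := fun τ => deriv F₂ t * τ - F₂ τ)
      (f' := fun τ => deriv F₂ t - deriv F₂ τ) ht
      (fun τ hτ => by
        have hτT : T₃ < τ := by linarith [hτ.1]
        simpa using ((hasDerivAt_id τ).const_mul (deriv F₂ t)).fun_sub (hd2 τ hτT))
      (fun τ hτ => by
        have := hmono2' τ t (by linarith [hτ.1]) hτ.2; linarith)
    linarith only [hmono]
  -- constants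
  set K₀ : ℝ := F₂ (T₃+1) / (2 * deriv F₂ (T₃+1)) with hK₀def
  have hF₂T₄pos : 0 < F₂ (T₃+1) := hF₂pos _ (by linarith)
  have hK₀pos : 0 < K₀ := by rw [hK₀def]; positivity
  set c' : ℝ := (2:ℝ)^p / ((p+1)*(p+2)) with hc'def
  have hc'pos : 0 < c' := by rw [hc'def]; positivity
  set aa : ℝ := (2+K₀)*c' with haadef
  set bb : ℝ := c'/2 with hbbdef
  have haapos : 0 < aa := by rw [haadef]; positivity
  have hbbpos : 0 < bb := by rw [hbbdef]; positivity
  set T₅ : ℝ := T₃ + 1 + 2*K₀ + 4*bb + 4*aa + 1 with hT₅def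
  have hT₅ge : T₃ + 1 ≤ T₅ := by rw [hT₅def]; linarith
  -- exponential domination of linear function
  have hexpT : ∀ t, T₅ ≤ t → aa + bb * t ≤ Real.exp t := by
    intro t ht
    have ht1 : 4*bb + 1 ≤ t := by rw [hT₅def] at ht; linarith
    have ht2 : 4*aa ≤ t := by rw [hT₅def] at ht; linarith
    exact expdom haapos hbbpos ht1 ht2
  -- KEY STEP: lower bound for F₁ t * (deriv F₂ t)²
  have key4 : ∀ t, T₅ ≤ t →
      k₂/(4*(p+1)*(p+2)) * Real.exp (-t) * (t+R)^(-α₂) * (F₂ t)^(p+2)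
        ≤ F₁ t * (deriv F₂ t * deriv F₂ t) := by
    intro t ht
    have htT4 : T₃ + 1 ≤ t := le_trans hT₅ge ht
    have htT3 : T₃ ≤ t := by linarith
    have htT3' : T₃ < t := by linarith
    have hFt : 0 < F₂ t := hF₂pos t htT3
    have hdt : 0 < deriv F₂ t := lt_of_lt_of_le hm₀pos (hd2pos t htT4)
    have htRt : 0 < t + R := htR t htT3
    set d : ℝ := F₂ t / (2 * deriv F₂ t) with hddef
    have hdpos : 0 < d := by rw [hddef]; positivity
    have hd_eq : d * deriv F₂ t = F₂ t / 2 := by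
      rw [hddef]; field_simp
    have hdle : d ≤ K₀ + (t - (T₃+1))/2 := by
      rw [hddef, div_le_iff₀ (by positivity : (0:ℝ) < 2 * deriv F₂ t)]
      have hK₀2 : K₀ * (2 * deriv F₂ (T₃+1)) = F₂ (T₃+1) := by
        rw [hK₀def]; field_simp
      linarith only [hgrow t htT4, hK₀2,
        mul_le_mul_of_nonneg_left (hd2pos t htT4) hK₀pos.le]
    set a : ℝ := t - d with hadef
    have haT4 : T₃ + 1 ≤ a := by
      rw [hadef, hT₅def] at *
      linarith
    have haT3 : T₃ < a := by linarith
    have hat : a ≤ t := by rw [hadef]; linarith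
    -- F₂ is at least half its final value on [a, t]
    have hhalf : ∀ s, s ∈ Icc a t → F₂ t ≤ 2 * F₂ s := by
      intro s hs
      have hsT3 : T₃ < s := lt_of_lt_of_le haT3 hs.1
      have hkey := mono_aux' (f := fun τ => deriv F₂ t * τ - F₂ τ)
        (f' := fun τ => deriv F₂ t - deriv F₂ τ) hs.2
        (fun τ hτ => by
          have hτT : T₃ < τ := lt_of_lt_of_le hsT3 hτ.1
          simpa using ((hasDerivAt_id τ).const_mul (deriv F₂ t)).fun_sub (hd2 τ hτT))
        (fun τ hτ => by
          have := hmono2' τ t (lt_of_lt_of_le hsT3 hτ.1) hτ.2; linarith)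
      have h9 : deriv F₂ t * (t - s) ≤ deriv F₂ t * d :=
        mul_le_mul_of_nonneg_left (by rw [hadef] at hs; linarith [hs.1]) hdt.le
      linarith only [hkey, h9, hd_eq]
    set G : ℝ := k₂ * (t+R)^(-α₂) * (F₂ t / 2)^p with hGdef
    have hGpos : 0 < G := by rw [hGdef]; positivity
    -- lower bound on the source term on [a, t]
    have hglb : ∀ s, s ∈ Icc a t → G ≤ k₂ * (s+R)^(-α₂) * (F₂ s)^p := by
      intro s hs
      have hsT3 : T₃ ≤ s := le_of_lt (lt_of_lt_of_le haT3 hs.1)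
      have hsR : 0 < s + R := htR s hsT3
      have e2 : (t + R) ^ (-α₂) ≤ (s + R) ^ (-α₂) := by
        rw [Real.rpow_neg htRt.le, Real.rpow_neg hsR.le]
        apply inv_anti₀ (by positivity)
        exact Real.rpow_le_rpow hsR.le (by linarith [hs.2]) hα₂
      have e3 : (F₂ t / 2) ^ p ≤ (F₂ s) ^ p := by
        apply Real.rpow_le_rpow (by positivity) ?_ hp0.le
        linarith [hhalf s hs]
      rw [hGdef]
      refine mul_le_mul (mul_le_mul le_rfl e2 (by positivity) hk₂.le) e3
        (by positivity) (by positivity)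
    -- first integration: lower bound for deriv F₁ on [a, t]
    have hd1lb : ∀ τ, τ ∈ Icc a t → G * (1 - Real.exp (a - τ)) ≤ deriv F₁ τ := by
      intro τ hτ
      have hkey := mono_aux' (f := fun u => Real.exp u * deriv F₁ u - G * Real.exp u)
        (f' := fun u => (Real.exp u * deriv F₁ u + Real.exp u * deriv (deriv F₁) u)
          - G * Real.exp u) hτ.1
        (fun u hu => by
          have huT : T₃ < u := lt_of_lt_of_le haT3 hu.1
          exact ((Real.hasDerivAt_exp u).mul (hd1' u huT)).sub
            ((Real.hasDerivAt_exp u).const_mul G))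
        (fun u hu => by
          have huT : T₃ ≤ u := le_of_lt (lt_of_lt_of_le haT3 hu.1)
          have hu' : u ∈ Icc a t := ⟨hu.1, le_trans hu.2 hτ.2⟩
          have h10 := mul_le_mul_of_nonneg_left
            (le_trans (hglb u hu') (h2 u huT)) (Real.exp_pos u).le
          linarith only [h10])
      have hF₁'a : 0 ≤ deriv F₁ a := h1' a (by linarith)
      have hexp2 : G * (Real.exp (a-τ) * Real.exp τ) = G * Real.exp a := by
        rw [← Real.exp_add]; ring_nf
      rw [← mul_le_mul_iff_of_pos_right (Real.exp_pos τ)]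
      linarith only [hkey, hexp2, mul_nonneg hF₁'a (Real.exp_pos a).le]
    -- second integration: lower bound for F₁ t
    have hF₁lb : G * (d - 1 + Real.exp (-d)) ≤ F₁ t := by
      have hkey := mono_aux' (f := fun u => F₁ u - G * (u + Real.exp (a - u)))
        (f' := fun u => deriv F₁ u - G * (1 + Real.exp (a - u) * (0 - 1))) hat
        (fun u hu => by
          have huT : T₃ < u := lt_of_lt_of_le haT3 hu.1
          have hexp' : HasDerivAt (fun u : ℝ => Real.exp (a - u))
              (Real.exp (a - u) * (0 - 1)) u :=
            (HasDerivAt.exp ((hasDerivAt_const u a).sub (hasDerivAt_id u)))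
          exact (hd1 u huT).sub (((hasDerivAt_id u).add hexp').const_mul G))
        (fun u hu => by
          have h20 := hd1lb u hu
          linarith only [h20])
      have ha0 : a - a = 0 := by ring
      have hat' : a - t = -d := by rw [hadef]; ring
      rw [ha0, hat', Real.exp_zero] at hkey
      have hF₁a : 0 < F₁ a := hF₁pos a (by linarith)
      have htad : t = a + d := by rw [hadef]; ring
      nlinarith only [hkey, hF₁a, htad, hGpos]
    -- conclude
    have hφ := exp_aux hdpos.le
    have h2d : c' * (2 + d) ≤ Real.exp t := by
      have hB := hexpT t ht
      have : c' * (2 + d) ≤ aa + bb * t := by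
        rw [haadef, hbbdef]
        nlinarith only [hdle, hc'pos, hT₃, hK₀pos]
      linarith
    have hstep : d * d * c' / Real.exp t ≤ d - 1 + Real.exp (-d) := by
      refine le_trans ?_ hφ
      rw [div_le_div_iff₀ (Real.exp_pos t) (by linarith only [hdpos] : (0:ℝ) < 2 + d)]
      calc d * d * c' * (2 + d) = (d*d) * (c' * (2+d)) := by ring
        _ ≤ (d*d) * Real.exp t := mul_le_mul_of_nonneg_left h2d (by positivity)
        _ = d * d * Real.exp t := by ring
    have main : G * (d * d * c' / Real.exp t) ≤ F₁ t :=
      le_trans (mul_le_mul_of_nonneg_left hstep hGpos.le) hF₁lb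
    have main2 : G * (d * d * c' / Real.exp t) * (deriv F₂ t * deriv F₂ t)
        ≤ F₁ t * (deriv F₂ t * deriv F₂ t) :=
      mul_le_mul_of_nonneg_right main (by positivity)
    have heq : G * (d * d * c' / Real.exp t) * (deriv F₂ t * deriv F₂ t)
        = k₂/(4*(p+1)*(p+2)) * Real.exp (-t) * (t+R)^(-α₂) * F₂ t ^ (p+2) := by
      rw [hGdef, hddef, hc'def, Real.exp_neg]
      exact heq_aux hFt hdt (Real.exp_pos t) hp0
    rw [← heq]
    exact main2
  -- constants for the final step
  set M : ℝ := (p+2)*q+1 with hMdef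
  have hMpos : 0 < M := by
    have : 0 < (p+2)*q := mul_pos (by linarith) hq0
    rw [hMdef]; linarith
  set Cq : ℝ := (k₂/(4*(p+1)*(p+2)))^q with hCqdef
  have hCqpos : 0 < Cq := by
    rw [hCqdef]
    apply Real.rpow_pos_of_pos
    positivity
  set A : ℝ := (2*q+2)*k₄*Cq/M with hAdef
  have hApos : 0 < A := by rw [hAdef]; positivity
  have hT₅T3 : T₃ < T₅ := by rw [hT₅def]; linarith
  -- step 5
  have key5 : ∀ t, T₅ ≤ t →
      A * (Real.exp (-((q+β₃)*t)) * (t+R)^(-(β₂+α₂*q))) * ((F₂ t)^M - (F₂ T₅)^M)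
        ≤ (deriv F₂ t)^(2*q+2) := by
    intro t ht
    set W : ℝ := Real.exp (-((q+β₃)*t)) * (t+R)^(-(β₂+α₂*q)) with hWdef
    have htT3 : T₃ < t := lt_of_lt_of_le hT₅T3 ht
    have htRt : 0 < t + R := htR t htT3.le
    have hWpos : 0 < W := by rw [hWdef]; positivity
    have hkey := mono_aux'
      (f := fun s => (deriv F₂ s)^(2*q+2) - A * W * (F₂ s)^M)
      (f' := fun s => deriv (deriv F₂) s * (2*q+2) * (deriv F₂ s)^(2*q+2-1)
        - A * W * (deriv F₂ s * M * (F₂ s)^(M-1))) ht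
      (fun s hs => by
        have hsT3 : T₃ < s := lt_of_lt_of_le hT₅T3 hs.1
        have hsd : 0 < deriv F₂ s := lt_of_lt_of_le hm₀pos (hd2pos s (le_trans hT₅ge hs.1))
        have hXs : 0 < F₂ s := hF₂pos s hsT3.le
        exact ((hd2' s hsT3).rpow_const (Or.inl (ne_of_gt hsd))).sub
          (((hd2 s hsT3).rpow_const (Or.inl (ne_of_gt hXs))).const_mul (A*W)))
      (fun s hs => by
        have hsT3 : T₃ < s := lt_of_lt_of_le hT₅T3 hs.1
        have hsd : 0 < deriv F₂ s := lt_of_lt_of_le hm₀pos (hd2pos s (le_trans hT₅ge hs.1))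
        have hXs : 0 < F₂ s := hF₂pos s hsT3.le
        have hsR : 0 < s + R := htR s hsT3.le
        rw [sub_nonneg]
        -- abbreviations
        have c2 := key4 s hs.1
        have c3 : (k₂/(4*(p+1)*(p+2)) * Real.exp (-s) * (s+R)^(-α₂) * (F₂ s)^(p+2))^q
            ≤ (F₁ s * (deriv F₂ s * deriv F₂ s))^q :=
          Real.rpow_le_rpow (by positivity) c2 hq0.le
        have ex1 : (k₂/(4*(p+1)*(p+2)) * Real.exp (-s) * (s+R)^(-α₂) * (F₂ s)^(p+2))^q
            = Cq * Real.exp (-(q*s)) * (s+R)^(-(α₂*q)) * (F₂ s)^((p+2)*q) := by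
          rw [Real.mul_rpow (by positivity) (by positivity),
              Real.mul_rpow (by positivity) (by positivity),
              Real.mul_rpow (by positivity) (by positivity),
              ← Real.rpow_mul hsR.le, ← Real.rpow_mul hXs.le, exp_rpow', hCqdef]
          ring_nf
        have ex2 : (F₁ s * (deriv F₂ s * deriv F₂ s))^q
            = (F₁ s)^q * (deriv F₂ s * deriv F₂ s)^q :=
          Real.mul_rpow (hF₁pos s hsT3.le).le (by positivity)
        rw [ex1, ex2] at c3
        -- second derivative lower bound
        have c1 := h4 s hsT3.le
        -- weight monotonicity
        have w1 : Real.exp (-((q+β₃)*t)) ≤ Real.exp (-((q+β₃)*s)) := by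
          apply Real.exp_le_exp.2
          nlinarith only [hs.2, hq0, hβ₃]
        have w2 : (t+R)^(-(β₂+α₂*q)) ≤ (s+R)^(-(β₂+α₂*q)) := by
          rw [Real.rpow_neg htRt.le, Real.rpow_neg hsR.le]
          apply inv_anti₀ (by positivity)
          exact Real.rpow_le_rpow hsR.le (by linarith [hs.2]) (by positivity)
        have hWle : W ≤ Real.exp (-((q+β₃)*s)) * (s+R)^(-(β₂+α₂*q)) := by
          rw [hWdef]
          exact mul_le_mul w1 w2 (by positivity) (Real.exp_pos _).le
        -- combine
        have hAM : A * M = (2*q+2)*k₄*Cq := by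
          rw [hAdef]; field_simp
        have hMm1 : (F₂ s)^(M-1) = (F₂ s)^((p+2)*q) := by
          rw [hMdef]; ring_nf
        have eE : Real.exp (-β₃*s) * Real.exp (-(q*s)) = Real.exp (-((q+β₃)*s)) := by
          rw [← Real.exp_add]; ring_nf
        have eP : (s+R)^(-β₂) * (s+R)^(-(α₂*q)) = (s+R)^(-(β₂+α₂*q)) := by
          rw [← Real.rpow_add hsR]; ring_nf
        calc A * W * (deriv F₂ s * M * F₂ s ^ (M-1))
            = (2*q+2)*k₄*Cq * W * F₂ s ^ ((p+2)*q) * deriv F₂ s := by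
              rw [hMm1, ← hAM]; ring
          _ ≤ (2*q+2)*k₄*Cq * (Real.exp (-((q+β₃)*s)) * (s+R)^(-(β₂+α₂*q)))
                * F₂ s ^ ((p+2)*q) * deriv F₂ s := by
              have hnn : (0:ℝ) ≤ (2*q+2)*k₄*Cq := by positivity
              have hxn : (0:ℝ) ≤ F₂ s ^ ((p+2)*q) := by positivity
              have := mul_le_mul_of_nonneg_left hWle hnn
              exact mul_le_mul_of_nonneg_right
                (mul_le_mul_of_nonneg_right this hxn) hsd.le
          _ = (2*q+2) * deriv F₂ s * (Real.exp (-β₃*s) * (s+R)^(-β₂)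
                * (k₄ * (Cq * Real.exp (-(q*s)) * (s+R)^(-(α₂*q)) * F₂ s ^ ((p+2)*q)))) := by
              rw [← eE, ← eP]; ring
          _ ≤ (2*q+2) * deriv F₂ s * (Real.exp (-β₃*s) * (s+R)^(-β₂)
                * (k₄ * ((F₁ s)^q * (deriv F₂ s * deriv F₂ s)^q))) := by
              have hnn2 : (0:ℝ) ≤ (2*q+2) * deriv F₂ s := by positivity
              have hnn3 : (0:ℝ) ≤ Real.exp (-β₃*s) * (s+R)^(-β₂) := by positivity
              have h11 := mul_le_mul_of_nonneg_left c3 hk₄.le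
              have h12 := mul_le_mul_of_nonneg_left h11 hnn3
              exact mul_le_mul_of_nonneg_left h12 hnn2
          _ = (2*q+2) * (k₄ * Real.exp (-β₃*s) * (s+R)^(-β₂) * (F₁ s)^q)
                * ((deriv F₂ s * deriv F₂ s)^q * deriv F₂ s) := by ring
          _ ≤ (2*q+2) * deriv (deriv F₂) s * ((deriv F₂ s * deriv F₂ s)^q * deriv F₂ s) := by
              have hnn4 : (0:ℝ) ≤ (deriv F₂ s * deriv F₂ s)^q * deriv F₂ s := by positivity
              have h13 := mul_le_mul_of_nonneg_left c1 (by linarith only [hq0] : (0:ℝ) ≤ 2*q+2)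
              exact mul_le_mul_of_nonneg_right h13 hnn4
          _ = deriv (deriv F₂) s * (2*q+2) * (deriv F₂ s)^(2*q+2-1) := by
              rw [sq_rpow hsd]; ring)
    have h0 : (0:ℝ) ≤ (deriv F₂ T₅)^(2*q+2) := Real.rpow_nonneg (h3' T₅ hT₅T3.le) _
    linarith only [hkey, h0]
  -- choice of T₆ via divergence of the lower bound for F₂
  have htend : Filter.Tendsto (fun t : ℝ => k₃ * (t+R)^β₁) Filter.atTop Filter.atTop := by
    apply Filter.Tendsto.const_mul_atTop hk₃
    exact (tendsto_rpow_atTop hβ₁).comp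
      (Filter.tendsto_atTop_add_const_right _ R Filter.tendsto_id)
  obtain ⟨T₆', hT₆'⟩ := Filter.eventually_atTop.1
    (htend.eventually_ge_atTop ((2:ℝ)^(1/M) * F₂ T₅))
  refine ⟨max T₅ T₆', le_trans (le_of_lt hT₅T3) (le_max_left _ _), ?_⟩
  intro t ht
  have htT₅ : T₅ ≤ t := le_trans (le_max_left _ _) ht
  have htT3 : T₃ ≤ t := le_trans hT₅T3.le htT₅
  have htRt : 0 < t + R := htR t htT3
  have hDpos : 0 < deriv F₂ t := lt_of_lt_of_le hm₀pos (hd2pos t (le_trans hT₅ge htT₅))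
  have hXt : 0 < F₂ t := hF₂pos t htT3
  have hF₂T₅pos : 0 < F₂ T₅ := hF₂pos T₅ hT₅T3.le
  have hVt : (2:ℝ)^(1/M) * F₂ T₅ ≤ F₂ t :=
    le_trans (hT₆' t (le_trans (le_max_right _ _) ht)) (h3 t htT3)
  have hVM : ((2:ℝ)^(1/M) * F₂ T₅)^M = 2 * (F₂ T₅)^M := by
    rw [Real.mul_rpow (by positivity) hF₂T₅pos.le, ← Real.rpow_mul (by norm_num : (0:ℝ) ≤ 2),
      one_div, inv_mul_cancel₀ (ne_of_gt hMpos), Real.rpow_one]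
  have hF₂M : 2 * (F₂ T₅)^M ≤ (F₂ t)^M := by
    rw [← hVM]; exact Real.rpow_le_rpow (by positivity) hVt hMpos.le
  have hE : (0:ℝ) < Real.exp (-((q+β₃)*t)) := Real.exp_pos _
  have hP : (0:ℝ) < (t+R)^(-(β₂+α₂*q)) := by positivity
  have h14 : A/2 * Real.exp (-((q+β₃)*t)) * (t+R)^(-(β₂+α₂*q)) * (F₂ t)^M
      ≤ (deriv F₂ t)^(2*q+2) := by
    have hk := key5 t htT₅
    have hnn : (0:ℝ) ≤ A * (Real.exp (-((q+β₃)*t)) * (t+R)^(-(β₂+α₂*q)))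
        * ((F₂ t)^M - (F₂ T₅)^M - (F₂ t)^M/2) :=
      mul_nonneg (mul_nonneg hApos.le (by positivity)) (by linarith)
    linarith only [hk, hnn]
  have hk₅A : (2*q+1)*k₂^q*k₄/(2*M*(4*(p+1)*(p+2))^q) ≤ A/2 := by
    have hCq2 : Cq = k₂^q / (4*(p+1)*(p+2))^q := by
      rw [hCqdef, Real.div_rpow hk₂.le (by positivity)]
    rw [hAdef, hCq2]
    exact k5_le hq (by positivity) hk₄ hMpos (by positivity)
  have h16 : (2*q+1)*k₂^q*k₄/(2*M*(4*(p+1)*(p+2))^q)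
      * Real.exp (-((q+β₃)*t)) * (t+R)^(-(β₂+α₂*q)) * (F₂ t)^M
      ≤ (deriv F₂ t)^(2*q+2) := by
    refine le_trans ?_ h14
    exact mul_le_mul_of_nonneg_right (mul_le_mul_of_nonneg_right
      (mul_le_mul_of_nonneg_right hk₅A hE.le) hP.le) (Real.rpow_nonneg hXt.le M)
  have h17 := Real.rpow_le_rpow (by positivity) h16
    (show (0:ℝ) ≤ 1/(2*q+2) by positivity)
  have h18 : ((deriv F₂ t)^(2*q+2))^(1/(2*q+2)) = deriv F₂ t := by
    rw [← Real.rpow_mul hDpos.le, mul_one_div, div_self (by positivity : (2*q+2) ≠ 0),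
      Real.rpow_one]
  rw [h18] at h17
  refine le_trans (le_of_eq ?_) h17
  have hk₅pos : (0:ℝ) < (2*q+1)*k₂^q*k₄/(2*M*(4*(p+1)*(p+2))^q) := by positivity
  have e1 : ((2*q+1)*k₂^q*k₄/(2*M*(4*(p+1)*(p+2))^q))^(1/(2*(q+1)))
      = ((2*q+1)*k₂^q*k₄/(2*M*(4*(p+1)*(p+2))^q))^(1/(2*q+2)) := by
    congr 1; ring
  have e2 : Real.exp (-((q+β₃)/(2*(q+1)))*t) = (Real.exp (-((q+β₃)*t)))^(1/(2*q+2)) := by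
    rw [exp_rpow']; congr 1; ring
  have e3 : (t+R)^(-((β₂+α₂*q)/(2*(q+1)))) = ((t+R)^(-(β₂+α₂*q)))^(1/(2*q+2)) := by
    rw [← Real.rpow_mul htRt.le]; congr 1; ring
  have e4 : (F₂ t)^(M/(2*(q+1))) = ((F₂ t)^M)^(1/(2*q+2)) := by
    rw [← Real.rpow_mul hXt.le]; congr 1; ring
  rw [e1, e2, e3, e4, ← Real.mul_rpow hk₅pos.le hE.le,
    ← Real.mul_rpow (by positivity) hP.le,
    ← Real.mul_rpow (by positivity) (Real.rpow_nonneg hXt.le M)]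
end

section
/- There exists T₇ ≥ T₃ such that for all t ≥ T₇ one has F₂'(t) · (F₁'(t) + F₁(t)) ≥ (k₄/(2(q+1))) e^{-β₃ t} (t+R)^{-β₂} F₁(t)^{q+1}. -/
open Real Set

lemma myMonoOn {f : ℝ → ℝ} {a : ℝ} (h : ∀ t ∈ Ici a, ∃ e, 0 ≤ e ∧ HasDerivAt f e t) :
    MonotoneOn f (Ici a) := by
  apply monotoneOn_of_deriv_nonneg (convex_Ici a)
  · intro t ht; obtain ⟨e, _, hd⟩ := h t ht
    exact hd.continuousAt.continuousWithinAt
  · intro t ht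
    rw [interior_Ici] at ht
    obtain ⟨e, _, hd⟩ := h t (mem_Ici.mpr (mem_Ioi.mp ht).le)
    exact hd.differentiableAt.differentiableWithinAt
  · intro t ht
    rw [interior_Ici] at ht
    obtain ⟨e, he, hd⟩ := h t (mem_Ici.mpr (mem_Ioi.mp ht).le)
    rw [hd.deriv]; exact he

lemma myStrictMonoOn {f : ℝ → ℝ} {a : ℝ} (h : ∀ t ∈ Ici a, ∃ e, 0 < e ∧ HasDerivAt f e t) :
    StrictMonoOn f (Ici a) := by
  apply strictMonoOn_of_deriv_pos (convex_Ici a)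
  · intro t ht; obtain ⟨e, _, hd⟩ := h t ht
    exact hd.continuousAt.continuousWithinAt
  · intro t ht
    rw [interior_Ici] at ht
    obtain ⟨e, he, hd⟩ := h t (mem_Ici.mpr (mem_Ioi.mp ht).le)
    rw [hd.deriv]; exact he

/-- F₂'·(F₁' + F₁) lower bound for large times. -/
theorem stmt_5
    (p q α₁ α₂ β₁ β₂ β₃ k₀ k₂ k₃ k₄ R T₃ : ℝ)
    (hp : 1 < p) (hq : 1 < q)
    (hα₂ : 0 ≤ α₂) (hβ₂ : 0 ≤ β₂) (hβ₃ : 0 ≤ β₃)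
    (hα₁ : 0 < α₁) (hβ₁ : 0 < β₁)
    (hk₀ : 0 < k₀) (hk₂ : 0 < k₂) (hk₃ : 0 < k₃) (hk₄ : 0 < k₄)
    (hR : 0 < R) (hT₃ : 0 < T₃)
    (F₁ F₂ : ℝ → ℝ)
    (hF₁ : ContDiffOn ℝ 2 F₁ (Ici T₃)) (hF₂ : ContDiffOn ℝ 2 F₂ (Ici T₃))
    (h1 : ∀ t, T₃ ≤ t → k₀ * (t + R) ^ α₁ ≤ F₁ t)
    (h1' : ∀ t, T₃ ≤ t → 0 ≤ deriv F₁ t)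
    (h2 : ∀ t, T₃ ≤ t →
      k₂ * (t + R) ^ (-α₂) * (F₂ t) ^ p ≤ deriv (deriv F₁) t + deriv F₁ t)
    (h3 : ∀ t, T₃ ≤ t → k₃ * (t + R) ^ β₁ ≤ F₂ t)
    (h3' : ∀ t, T₃ ≤ t → 0 ≤ deriv F₂ t)
    (h4 : ∀ t, T₃ ≤ t →
      k₄ * Real.exp (-β₃ * t) * (t + R) ^ (-β₂) * (F₁ t) ^ q ≤ deriv (deriv F₂) t) :
    ∃ T₇, T₃ ≤ T₇ ∧ ∀ t, T₇ ≤ t →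
      k₄ / (2 * (q + 1)) * Real.exp (-β₃ * t) * (t + R) ^ (-β₂) * (F₁ t) ^ (q + 1) ≤
        deriv F₂ t * (deriv F₁ t + F₁ t) := by
  have hq1 : (0:ℝ) < q + 1 := by linarith
  have hc2 : 0 < k₄ / (2 * (q + 1)) := by positivity
  set c2 : ℝ := k₄ / (2 * (q + 1)) with hc2def
  set κ : ℝ := k₀ * (T₃ + R) ^ α₁ with hκdef
  have hκ : 0 < κ := mul_pos hk₀ (Real.rpow_pos_of_pos (by linarith) _)
  have htR : ∀ t : ℝ, T₃ ≤ t → 0 < t + R := fun t ht => by linarith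
  have hF₁pos : ∀ t, T₃ ≤ t → 0 < F₁ t := fun t ht =>
    lt_of_lt_of_le (mul_pos hk₀ (Real.rpow_pos_of_pos (htR t ht) _)) (h1 t ht)
  have hF₂pos : ∀ t, T₃ ≤ t → 0 < F₂ t := fun t ht =>
    lt_of_lt_of_le (mul_pos hk₃ (Real.rpow_pos_of_pos (htR t ht) _)) (h3 t ht)
  have hκle : ∀ t, T₃ ≤ t → κ ≤ F₁ t := by
    intro t ht
    refine le_trans ?_ (h1 t ht)
    exact mul_le_mul_of_nonneg_left
      (Real.rpow_le_rpow (by linarith) (by linarith) hα₁.le) hk₀.le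
  -- differentiability facts
  have hD1 : ∀ t, T₃ < t → HasDerivAt F₁ (deriv F₁ t) t := by
    intro t ht
    exact (((hF₁.mono Ioi_subset_Ici_self).differentiableOn (by norm_num)).differentiableAt
      (isOpen_Ioi.mem_nhds ht)).hasDerivAt
  have hD2 : ∀ t, T₃ < t → HasDerivAt F₂ (deriv F₂ t) t := by
    intro t ht
    exact (((hF₂.mono Ioi_subset_Ici_self).differentiableOn (by norm_num)).differentiableAt
      (isOpen_Ioi.mem_nhds ht)).hasDerivAt
  have hD1' : ∀ t, T₃ < t → HasDerivAt (deriv F₁) (deriv (deriv F₁) t) t := by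
    intro t ht
    have hd : ContDiffOn ℝ 1 (deriv F₁) (Ioi T₃) :=
      (hF₁.mono Ioi_subset_Ici_self).deriv_of_isOpen isOpen_Ioi (by norm_num)
    exact ((hd.differentiableOn (by norm_num)).differentiableAt
      (isOpen_Ioi.mem_nhds ht)).hasDerivAt
  have hD2' : ∀ t, T₃ < t → HasDerivAt (deriv F₂) (deriv (deriv F₂) t) t := by
    intro t ht
    have hd : ContDiffOn ℝ 1 (deriv F₂) (Ioi T₃) :=
      (hF₂.mono Ioi_subset_Ici_self).deriv_of_isOpen isOpen_Ioi (by norm_num)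
    exact ((hd.differentiableOn (by norm_num)).differentiableAt
      (isOpen_Ioi.mem_nhds ht)).hasDerivAt
  -- the key function
  set H : ℝ → ℝ := fun s => deriv F₂ s * (deriv F₁ s + F₁ s) -
      c2 * Real.exp (-β₃ * s) * (s + R) ^ (-β₂) * F₁ s ^ (q + 1) with hHdef
  -- key derivative estimate
  have keyH : ∀ t, T₃ < t → ∃ e, HasDerivAt H e t ∧
      k₄ * (Real.exp (-β₃ * t) * (t + R) ^ (-β₂) * (F₁ t ^ q * F₁ t)) ≤ e := by
    intro t ht
    have htT : T₃ ≤ t := ht.le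
    have hX : 0 < F₁ t := hF₁pos t htT
    have htR' : 0 < t + R := htR t htT
    have he : HasDerivAt (fun s => Real.exp (-β₃ * s)) (-β₃ * Real.exp (-β₃ * t)) t := by
      have := ((hasDerivAt_id t).const_mul (-β₃)).exp
      simpa [mul_comm] using this
    have hpow : HasDerivAt (fun s : ℝ => (s + R) ^ (-β₂)) (-β₂ * (t + R) ^ (-β₂ - 1)) t := by
      have := ((hasDerivAt_id t).add_const R).rpow_const (p := -β₂) (Or.inl htR'.ne')
      simpa using this
    have hP : HasDerivAt (fun s => F₁ s ^ (q + 1)) (deriv F₁ t * (q + 1) * F₁ t ^ q) t := by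
      have := (hD1 t ht).rpow_const (p := q + 1) (Or.inl hX.ne')
      simpa [add_sub_cancel_right] using this
    have hA : HasDerivAt (fun s => deriv F₂ s * (deriv F₁ s + F₁ s))
        (deriv (deriv F₂) t * (deriv F₁ t + F₁ t) +
          deriv F₂ t * (deriv (deriv F₁) t + deriv F₁ t)) t :=
      (hD2' t ht).mul ((hD1' t ht).add (hD1 t ht))
    have hB : HasDerivAt (fun s => c2 * Real.exp (-β₃ * s) * (s + R) ^ (-β₂) * F₁ s ^ (q + 1))
        (((c2 * (-β₃ * Real.exp (-β₃ * t))) * (t + R) ^ (-β₂) +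
          (c2 * Real.exp (-β₃ * t)) * (-β₂ * (t + R) ^ (-β₂ - 1))) * F₁ t ^ (q + 1) +
          (c2 * Real.exp (-β₃ * t) * (t + R) ^ (-β₂)) * (deriv F₁ t * (q + 1) * F₁ t ^ q)) t :=
      (((he.const_mul c2).mul hpow).mul hP)
    refine ⟨_, hA.sub hB, ?_⟩
    -- now the inequality
    have hPX : F₁ t ^ (q + 1) = F₁ t ^ q * F₁ t := Real.rpow_add_one hX.ne' q
    rw [hPX]
    have hE : 0 < Real.exp (-β₃ * t) := Real.exp_pos _
    have hPw : 0 < (t + R) ^ (-β₂) := Real.rpow_pos_of_pos htR' _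
    have hPw1 : 0 < (t + R) ^ (-β₂ - 1) := Real.rpow_pos_of_pos htR' _
    have hXq : 0 < F₁ t ^ q := Real.rpow_pos_of_pos hX _
    have hu : 0 ≤ deriv F₁ t := h1' t htT
    have hv : 0 ≤ deriv F₂ t := h3' t htT
    have hw : 0 ≤ deriv (deriv F₁) t + deriv F₁ t := by
      refine le_trans ?_ (h2 t htT)
      have : 0 < (t + R) ^ (-α₂) := Real.rpow_pos_of_pos htR' _
      have h2' : 0 < (F₂ t) ^ p := Real.rpow_pos_of_pos (hF₂pos t htT) _
      positivity
    have h4' := h4 t htT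
    have hc2k : c2 * (q + 1) = k₄ / 2 := by
      rw [hc2def]; field_simp
    -- main chain
    have key1 : k₄ * Real.exp (-β₃ * t) * (t + R) ^ (-β₂) * F₁ t ^ q * (deriv F₁ t + F₁ t) ≤
        deriv (deriv F₂) t * (deriv F₁ t + F₁ t) := by
      apply mul_le_mul_of_nonneg_right h4' (by linarith [hX.le])
    have key2 : 0 ≤ deriv F₂ t * (deriv (deriv F₁) t + deriv F₁ t) := mul_nonneg hv hw
    have key3 : 0 ≤ c2 * (β₃ * Real.exp (-β₃ * t)) * (t + R) ^ (-β₂) * (F₁ t ^ q * F₁ t) := by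
      positivity
    have key4 : 0 ≤ (c2 * Real.exp (-β₃ * t)) * (β₂ * (t + R) ^ (-β₂ - 1)) * (F₁ t ^ q * F₁ t) := by
      positivity
    have key5 : 0 ≤ k₄ / 2 * Real.exp (-β₃ * t) * (t + R) ^ (-β₂) * F₁ t ^ q * deriv F₁ t := by
      positivity
    have key6 : c2 * Real.exp (-β₃ * t) * (t + R) ^ (-β₂) * (deriv F₁ t * (q + 1) * F₁ t ^ q) =
        k₄ / 2 * Real.exp (-β₃ * t) * (t + R) ^ (-β₂) * F₁ t ^ q * deriv F₁ t := by
      rw [hc2def]; field_simp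
    rw [key6]
    linarith [key1, key2, key3, key4, key5]
  have hHval : ∀ s, H s = deriv F₂ s * (deriv F₁ s + F₁ s) -
      c2 * Real.exp (-β₃ * s) * (s + R) ^ (-β₂) * F₁ s ^ (q + 1) := fun s => by rw [hHdef]
  have hMpos : ∀ t, T₃ ≤ t →
      0 < Real.exp (-β₃ * t) * (t + R) ^ (-β₂) * (F₁ t ^ q * F₁ t) := by
    intro t ht
    have hX := hF₁pos t ht
    have := Real.rpow_pos_of_pos hX q
    have := Real.rpow_pos_of_pos (htR t ht) (-β₂)
    have := Real.exp_pos (-β₃ * t)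
    positivity
  have hHmono : MonotoneOn H (Ici (T₃ + 1)) := by
    apply myMonoOn
    intro t ht
    have ht' : T₃ < t := by have : T₃ + 1 ≤ t := ht; linarith
    obtain ⟨e, hd, hle⟩ := keyH t ht'
    exact ⟨e, le_trans (le_of_lt (by
      have := hMpos t ht'.le
      positivity)) hle, hd⟩
  obtain ⟨T₇, hT₇, hHT₇⟩ : ∃ T₇, T₃ + 1 ≤ T₇ ∧ 0 ≤ H T₇ := by
    by_contra hcon
    push_neg at hcon
    set C : ℝ := 2 * (q + 1) * κ with hCdef
    have hC : 0 < C := by positivity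
    -- H - C·F₂ is monotone under the contradiction hypothesis
    have hG : MonotoneOn (fun s => H s - C * F₂ s) (Ici (T₃ + 1)) := by
      apply myMonoOn
      intro t ht
      have ht1 : T₃ + 1 ≤ t := ht
      have ht' : T₃ < t := by linarith
      have htT : T₃ ≤ t := ht'.le
      obtain ⟨e, hd, hle⟩ := keyH t ht'
      refine ⟨e - C * deriv F₂ t, ?_, hd.sub ((hD2 t ht').const_mul C)⟩
      have hneg := hcon t ht1
      rw [hHval t] at hneg
      have hX : 0 < F₁ t := hF₁pos t htT
      have hE : 0 < Real.exp (-β₃ * t) := Real.exp_pos _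
      have hPw : 0 < (t + R) ^ (-β₂) := Real.rpow_pos_of_pos (htR t htT) _
      have hXq : 0 < F₁ t ^ q := Real.rpow_pos_of_pos hX _
      have hu := h1' t htT
      have hv := h3' t htT
      have hPX : F₁ t ^ (q + 1) = F₁ t ^ q * F₁ t := Real.rpow_add_one hX.ne' q
      rw [hPX] at hneg
      have hvX : deriv F₂ t * F₁ t <
          (c2 * Real.exp (-β₃ * t) * (t + R) ^ (-β₂) * F₁ t ^ q) * F₁ t := by
        nlinarith [mul_nonneg hv hu]
      have hvlt : deriv F₂ t < c2 * Real.exp (-β₃ * t) * (t + R) ^ (-β₂) * F₁ t ^ q :=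
        lt_of_mul_lt_mul_right hvX hX.le
      have step1 : C * deriv F₂ t ≤
          C * (c2 * Real.exp (-β₃ * t) * (t + R) ^ (-β₂) * F₁ t ^ q) :=
        mul_le_mul_of_nonneg_left hvlt.le hC.le
      have hCc2 : C * (c2 * Real.exp (-β₃ * t) * (t + R) ^ (-β₂) * F₁ t ^ q) =
          κ * (k₄ * (Real.exp (-β₃ * t) * (t + R) ^ (-β₂) * F₁ t ^ q)) := by
        rw [hCdef, hc2def]; field_simp
      have stepκ : κ * (k₄ * (Real.exp (-β₃ * t) * (t + R) ^ (-β₂) * F₁ t ^ q)) ≤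
          F₁ t * (k₄ * (Real.exp (-β₃ * t) * (t + R) ^ (-β₂) * F₁ t ^ q)) :=
        mul_le_mul_of_nonneg_right (hκle t htT) (by positivity)
      have hrearr : F₁ t * (k₄ * (Real.exp (-β₃ * t) * (t + R) ^ (-β₂) * F₁ t ^ q)) =
          k₄ * (Real.exp (-β₃ * t) * (t + R) ^ (-β₂) * (F₁ t ^ q * F₁ t)) := by ring
      linarith [hle, step1, hCc2.le, hCc2.ge, stepκ, hrearr.le, hrearr.ge]
    -- F₂ is bounded
    have hFbound : ∀ t, T₃ + 1 ≤ t → C * F₂ t ≤ C * F₂ (T₃ + 1) - H (T₃ + 1) := by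
      intro t ht
      have h5 := hG (self_mem_Ici) (mem_Ici.mpr ht) ht
      have h6 := hcon t ht
      simp only [] at h5
      linarith
    -- F₂' is strictly increasing, hence eventually positive
    have hvmono : StrictMonoOn (deriv F₂) (Ici (T₃ + 1)) := by
      apply myStrictMonoOn
      intro t ht
      have ht1 : T₃ + 1 ≤ t := ht
      have ht' : T₃ < t := by linarith
      refine ⟨deriv (deriv F₂) t, lt_of_lt_of_le ?_ (h4 t ht'.le), hD2' t ht'⟩
      have hX := hF₁pos t ht'.le
      have hXq : 0 < F₁ t ^ q := Real.rpow_pos_of_pos hX _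
      have hPw : 0 < (t + R) ^ (-β₂) := Real.rpow_pos_of_pos (htR t ht'.le) _
      have hE : 0 < Real.exp (-β₃ * t) := Real.exp_pos _
      positivity
    set ε := deriv F₂ (T₃ + 2) with hεdef
    have hε : 0 < ε := by
      have h7 := hvmono (self_mem_Ici) (mem_Ici.mpr (by linarith : T₃ + 1 ≤ T₃ + 2))
        (by linarith : T₃ + 1 < T₃ + 2)
      have h8 := h3' (T₃ + 1) (by linarith)
      linarith
    have hvge : ∀ t, T₃ + 2 ≤ t → ε ≤ deriv F₂ t := by
      intro t ht
      exact hvmono.monotoneOn (mem_Ici.mpr (by linarith : T₃ + 1 ≤ T₃ + 2))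
        (mem_Ici.mpr (by linarith : T₃ + 1 ≤ t)) ht
    have hlin : MonotoneOn (fun s => F₂ s - ε * s) (Ici (T₃ + 2)) := by
      apply myMonoOn
      intro t ht
      have ht2 : T₃ + 2 ≤ t := ht
      refine ⟨deriv F₂ t - ε * 1, by have := hvge t ht2; linarith,
        (hD2 t (by linarith)).sub ((hasDerivAt_id t).const_mul ε)⟩
    -- get contradiction
    set B := C * F₂ (T₃ + 1) - H (T₃ + 1) with hBdef
    set a := (B / C + 1 - F₂ (T₃ + 2)) / ε with hadef
    set t₀ := T₃ + 2 + max a 0 with ht₀def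
    have ht₀ : T₃ + 2 ≤ t₀ := le_add_of_nonneg_right (le_max_right _ _)
    have h9 := hlin (self_mem_Ici) (mem_Ici.mpr ht₀) ht₀
    simp only [] at h9
    -- F₂ t₀ ≥ F₂ (T₃+2) + ε * max a 0 ≥ B/C + 1
    have h10 : B / C + 1 - F₂ (T₃ + 2) ≤ ε * max a 0 := by
      have h11 : B / C + 1 - F₂ (T₃ + 2) = ε * a := by
        rw [hadef]; field_simp
      rw [h11]
      exact mul_le_mul_of_nonneg_left (le_max_left _ _) hε.le
    have h12 : B / C + 1 ≤ F₂ t₀ := by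
      have : ε * t₀ = ε * (T₃ + 2) + ε * max a 0 := by rw [ht₀def]; ring
      linarith
    have h13 := hFbound t₀ (by linarith)
    have h14 : C * (B / C + 1) ≤ C * F₂ t₀ := mul_le_mul_of_nonneg_left h12 hC.le
    have h15 : C * (B / C + 1) = B + C := by field_simp
    linarith
  refine ⟨T₇, by linarith, fun t ht => ?_⟩
  have h16 := hHmono (mem_Ici.mpr hT₇) (mem_Ici.mpr (le_trans hT₇ ht)) ht
  rw [hHval t] at h16
  linarith
end

section
/- There exists T₈ ≥ T₃ such that for all t ≥ T₈ one has F₂(t) · (F₁'(t) + F₁(t))² ≥ (k₄/(4(q+1)(q+2))) e^{-β₃ t} (t+R)^{-β₂} F₁(t)^{q+2}. -/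
set_option maxHeartbeats 1000000

open Real Set

private lemma nonneg_of_deriv_nonneg' {a : ℝ} {f : ℝ → ℝ}
    (hdiff : ∀ x ∈ Ici a, DifferentiableAt ℝ f x)
    (h0 : 0 ≤ f a)
    (hder : ∀ x ∈ Ioi a, 0 ≤ deriv f x) :
    ∀ t, a ≤ t → 0 ≤ f t := by
  intro t ht
  have hm : MonotoneOn f (Ici a) := by
    apply monotoneOn_of_deriv_nonneg (convex_Ici a)
    · exact fun x hx => (hdiff x hx).continuousAt.continuousWithinAt
    · intro x hx
      rw [interior_Ici] at hx
      exact (hdiff x (mem_Ici.2 (le_of_lt (mem_Ioi.1 hx)))).differentiableWithinAt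
    · intro x hx
      rw [interior_Ici] at hx
      exact hder x hx
  exact le_trans h0 (hm self_mem_Ici ht ht)

/-- Lower bound for F₂·(F₁' + F₁)² for large times. -/
theorem stmt_6
    (p q α₁ α₂ β₁ β₂ β₃ k₀ k₂ k₃ k₄ R T₃ : ℝ)
    (hp : 1 < p) (hq : 1 < q)
    (hα₂ : 0 ≤ α₂) (hβ₂ : 0 ≤ β₂) (hβ₃ : 0 ≤ β₃)
    (hα₁ : 0 < α₁) (hβ₁ : 0 < β₁)
    (hk₀ : 0 < k₀) (hk₂ : 0 < k₂) (hk₃ : 0 < k₃) (hk₄ : 0 < k₄)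
    (hR : 0 < R) (hT₃ : 0 < T₃)
    (F₁ F₂ : ℝ → ℝ)
    (hF₁ : ContDiffOn ℝ 2 F₁ (Ici T₃)) (hF₂ : ContDiffOn ℝ 2 F₂ (Ici T₃))
    (h1 : ∀ t, T₃ ≤ t → k₀ * (t + R) ^ α₁ ≤ F₁ t)
    (h1' : ∀ t, T₃ ≤ t → 0 ≤ deriv F₁ t)
    (h2 : ∀ t, T₃ ≤ t →
      k₂ * (t + R) ^ (-α₂) * (F₂ t) ^ p ≤ deriv (deriv F₁) t + deriv F₁ t)
    (h3 : ∀ t, T₃ ≤ t → k₃ * (t + R) ^ β₁ ≤ F₂ t)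
    (h3' : ∀ t, T₃ ≤ t → 0 ≤ deriv F₂ t)
    (h4 : ∀ t, T₃ ≤ t →
      k₄ * Real.exp (-β₃ * t) * (t + R) ^ (-β₂) * (F₁ t) ^ q ≤ deriv (deriv F₂) t) :
    ∃ T₈, T₃ ≤ T₈ ∧ ∀ t, T₈ ≤ t →
      k₄ / (4 * (q + 1) * (q + 2)) * Real.exp (-β₃ * t) * (t + R) ^ (-β₂) * (F₁ t) ^ (q + 2) ≤
        F₂ t * (deriv F₁ t + F₁ t) ^ (2 : ℕ) := by
  -- derivative infrastructure
  have hcd1 : ContDiffOn ℝ 2 F₁ (Ioi T₃) := hF₁.mono Ioi_subset_Ici_self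
  have hd1 : ∀ s, T₃ < s → HasDerivAt F₁ (deriv F₁ s) s := fun s hs =>
    ((hcd1.differentiableOn (by norm_num)).differentiableAt (Ioi_mem_nhds hs)).hasDerivAt
  have hcd1' : ContDiffOn ℝ 1 (deriv F₁) (Ioi T₃) := hcd1.deriv_of_isOpen isOpen_Ioi (by norm_num)
  have hd1' : ∀ s, T₃ < s → HasDerivAt (deriv F₁) (deriv (deriv F₁) s) s := fun s hs =>
    ((hcd1'.differentiableOn (by norm_num)).differentiableAt (Ioi_mem_nhds hs)).hasDerivAt
  have hcd2 : ContDiffOn ℝ 2 F₂ (Ioi T₃) := hF₂.mono Ioi_subset_Ici_self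
  have hd2 : ∀ s, T₃ < s → HasDerivAt F₂ (deriv F₂ s) s := fun s hs =>
    ((hcd2.differentiableOn (by norm_num)).differentiableAt (Ioi_mem_nhds hs)).hasDerivAt
  have hcd2' : ContDiffOn ℝ 1 (deriv F₂) (Ioi T₃) := hcd2.deriv_of_isOpen isOpen_Ioi (by norm_num)
  have hd2' : ∀ s, T₃ < s → HasDerivAt (deriv F₂) (deriv (deriv F₂) s) s := fun s hs =>
    ((hcd2'.differentiableOn (by norm_num)).differentiableAt (Ioi_mem_nhds hs)).hasDerivAt
  -- basic facts
  have hq1 : (0:ℝ) < q + 1 := by linarith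
  have hq2 : (0:ℝ) < q + 2 := by linarith
  have hRp : ∀ s, T₃ ≤ s → 0 < s + R := fun s hs => by linarith
  have ha : ∀ s, T₃ ≤ s → 0 < F₁ s := fun s hs =>
    lt_of_lt_of_le (by have := hRp s hs; positivity) (h1 s hs)
  have hc : ∀ s, T₃ ≤ s → 0 < F₂ s := fun s hs =>
    lt_of_lt_of_le (by have := hRp s hs; positivity) (h3 s hs)
  have hH' : ∀ s, T₃ ≤ s → 0 ≤ deriv (deriv F₁) s + deriv F₁ s := fun s hs =>
    le_trans (by have := hRp s hs; have := hc s hs; positivity) (h2 s hs)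
  have hF1mono : MonotoneOn F₁ (Ici T₃) := by
    apply monotoneOn_of_deriv_nonneg (convex_Ici T₃) (hF₁.continuousOn)
    · intro x hx
      rw [interior_Ici] at hx
      exact (hd1 x hx).differentiableAt.differentiableWithinAt
    · intro x hx
      rw [interior_Ici] at hx
      exact h1' x hx.le
  -- F₁ grows beyond any bound
  have hbig : ∀ M : ℝ, ∃ T, T₃ + 1 ≤ T ∧ ∀ t, T ≤ t → M ≤ F₁ t := by
    intro M
    rcases le_or_gt M 0 with hM | hM
    · exact ⟨T₃ + 1, le_refl _, fun t ht => le_trans hM (ha t (by linarith)).le⟩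
    · refine ⟨max (T₃ + 1) ((M / k₀) ^ α₁⁻¹), le_max_left _ _, ?_⟩
      intro t ht
      have ht1 : T₃ + 1 ≤ t := le_trans (le_max_left _ _) ht
      have htp : (M / k₀) ^ α₁⁻¹ ≤ t := le_trans (le_max_right _ _) ht
      have hMk : (0:ℝ) ≤ M / k₀ := by positivity
      have key : M / k₀ ≤ (t + R) ^ α₁ := by
        calc M / k₀ = ((M / k₀) ^ α₁⁻¹) ^ α₁ := (Real.rpow_inv_rpow hMk hα₁.ne').symm
          _ ≤ (t + R) ^ α₁ := by
              apply Real.rpow_le_rpow (by positivity) (by linarith) hα₁.le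
      have := h1 t (by linarith)
      calc M = k₀ * (M / k₀) := by field_simp
        _ ≤ k₀ * (t + R) ^ α₁ := by nlinarith
        _ ≤ F₁ t := this
  set T₀ : ℝ := T₃ + 1 with hT₀def
  have hT₀3 : T₃ < T₀ := by rw [hT₀def]; linarith
  set A : ℝ := F₁ T₀ ^ (q + 1) with hAdef
  have hApos : 0 < A := Real.rpow_pos_of_pos (ha T₀ hT₀3.le) _
  -- Step A : K ≥ 0 on [T₀, ∞)
  set K : ℝ → ℝ := fun s => deriv F₂ s * (deriv F₁ s + F₁ s) -
      (q + 1)⁻¹ * (k₄ * (Real.exp (-β₃ * s) * (s + R) ^ (-β₂)) * (F₁ s ^ (q + 1) - A))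
      with hKdef
  have HK : ∀ s, T₃ < s → HasDerivAt K
      (deriv (deriv F₂) s * (deriv F₁ s + F₁ s)
        + deriv F₂ s * (deriv (deriv F₁) s + deriv F₁ s)
        - (q + 1)⁻¹ * ((k₄ * ((Real.exp (-β₃ * s) * (-β₃ * 1)) * (s + R) ^ (-β₂)
              + Real.exp (-β₃ * s) * (1 * (-β₂) * (s + R) ^ (-β₂ - 1)))) * (F₁ s ^ (q + 1) - A)
            + k₄ * (Real.exp (-β₃ * s) * (s + R) ^ (-β₂))
              * (deriv F₁ s * (q + 1) * F₁ s ^ (q + 1 - 1)))) s := by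
    intro s hs
    have hsR : 0 < s + R := hRp s hs.le
    have he : HasDerivAt (fun x : ℝ => Real.exp (-β₃ * x)) (Real.exp (-β₃ * s) * (-β₃ * 1)) s :=
      (HasDerivAt.const_mul (-β₃) (hasDerivAt_id s)).exp
    have hr : HasDerivAt (fun x : ℝ => (x + R) ^ (-β₂)) (1 * (-β₂) * (s + R) ^ (-β₂ - 1)) s :=
      ((hasDerivAt_id s).add_const R).rpow_const (Or.inl hsR.ne')
    have hpow : HasDerivAt (fun x => F₁ x ^ (q + 1))
        (deriv F₁ s * (q + 1) * F₁ s ^ (q + 1 - 1)) s :=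
      (hd1 s hs).rpow_const (Or.inl (ha s hs.le).ne')
    exact ((hd2' s hs).mul ((hd1' s hs).add (hd1 s hs))).sub
      ((((he.mul hr).const_mul k₄).mul (hpow.sub_const A)).const_mul ((q + 1)⁻¹))
  have hK : ∀ t, T₀ ≤ t → 0 ≤ K t := by
    apply nonneg_of_deriv_nonneg'
    · intro x hx
      exact (HK x (lt_of_lt_of_le hT₀3 hx)).differentiableAt
    · show (0:ℝ) ≤ K T₀
      rw [hKdef]
      simp only [hAdef, sub_self, mul_zero, sub_zero]
      exact mul_nonneg (h3' T₀ hT₀3.le) (add_nonneg (h1' T₀ hT₀3.le) (ha T₀ hT₀3.le).le)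
    · intro x hx
      have hx3 : T₃ < x := lt_trans hT₀3 hx
      rw [(HK x hx3).deriv]
      have hE : 0 < Real.exp (-β₃ * x) := Real.exp_pos _
      have hxR : 0 < x + R := hRp x hx3.le
      have hP : 0 < (x + R) ^ (-β₂) := Real.rpow_pos_of_pos hxR _
      have hP' : 0 < (x + R) ^ (-β₂ - 1) := Real.rpow_pos_of_pos hxR _
      have hax : 0 < F₁ x := ha x hx3.le
      have haq : 0 < F₁ x ^ q := Real.rpow_pos_of_pos hax _
      have hb : 0 ≤ deriv F₁ x := h1' x hx3.le
      have hH'x : 0 ≤ deriv (deriv F₁) x + deriv F₁ x := hH' x hx3.le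
      have hd2x : 0 ≤ deriv F₂ x := h3' x hx3.le
      have hXA : A ≤ F₁ x ^ (q + 1) := by
        rw [hAdef]
        exact Real.rpow_le_rpow (ha T₀ hT₀3.le).le
          (hF1mono (mem_Ici.2 hT₀3.le) (mem_Ici.2 hx3.le) (le_of_lt hx)) hq1.le
      have hexp : F₁ x ^ (q + 1 - 1) = F₁ x ^ q := by congr 1; ring
      rw [hexp]
      have h4x : k₄ * (Real.exp (-β₃ * x) * (x + R) ^ (-β₂)) * F₁ x ^ q
          ≤ deriv (deriv F₂) x := by
        have := h4 x hx3.le; linarith [this, (by ring :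
          k₄ * Real.exp (-β₃ * x) * (x + R) ^ (-β₂) * F₁ x ^ q
            = k₄ * (Real.exp (-β₃ * x) * (x + R) ^ (-β₂)) * F₁ x ^ q)]
      have e1 : (q + 1)⁻¹ * (k₄ * (Real.exp (-β₃ * x) * (x + R) ^ (-β₂))
            * (deriv F₁ x * (q + 1) * F₁ x ^ q))
          = k₄ * (Real.exp (-β₃ * x) * (x + R) ^ (-β₂)) * deriv F₁ x * F₁ x ^ q := by
        field_simp
      have e2 : (k₄ * ((Real.exp (-β₃ * x) * (-β₃ * 1)) * (x + R) ^ (-β₂)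
            + Real.exp (-β₃ * x) * (1 * (-β₂) * (x + R) ^ (-β₂ - 1)))) ≤ 0 := by
        nlinarith [mul_nonneg (mul_nonneg hβ₃ hE.le) hP.le,
          mul_nonneg (mul_nonneg hβ₂ hE.le) hP'.le, hk₄.le,
          mul_nonneg (mul_nonneg (mul_nonneg hk₄.le hβ₃) hE.le) hP.le,
          mul_nonneg (mul_nonneg (mul_nonneg hk₄.le hβ₂) hE.le) hP'.le]
      have e3 : (q + 1)⁻¹ * ((k₄ * ((Real.exp (-β₃ * x) * (-β₃ * 1)) * (x + R) ^ (-β₂)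
            + Real.exp (-β₃ * x) * (1 * (-β₂) * (x + R) ^ (-β₂ - 1))))
            * (F₁ x ^ (q + 1) - A)) ≤ 0 :=
        mul_nonpos_of_nonneg_of_nonpos (by positivity)
          (mul_nonpos_of_nonpos_of_nonneg e2 (by linarith))
      have e4 : k₄ * (Real.exp (-β₃ * x) * (x + R) ^ (-β₂)) * F₁ x ^ q
            * (deriv F₁ x + F₁ x) ≤ deriv (deriv F₂) x * (deriv F₁ x + F₁ x) :=
        mul_le_mul_of_nonneg_right h4x (by linarith)
      have e5 : 0 ≤ deriv F₂ x * (deriv (deriv F₁) x + deriv F₁ x) := mul_nonneg hd2x hH'x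
      have e6 : 0 ≤ k₄ * (Real.exp (-β₃ * x) * (x + R) ^ (-β₂)) * F₁ x ^ q * F₁ x := by
        positivity
      linarith [e1, e3, e4, e5, e6]
  -- Step B
  obtain ⟨T₄, hT₄0, hT₄⟩ := hbig ((2 * A) ^ (q + 1)⁻¹)
  have hT₄3 : T₃ < T₄ := lt_of_lt_of_le hT₀3 hT₄0
  have hKB : ∀ t, T₄ ≤ t →
      (2 * (q + 1))⁻¹ * (k₄ * (Real.exp (-β₃ * t) * (t + R) ^ (-β₂)) * F₁ t ^ (q + 1))
        ≤ deriv F₂ t * (deriv F₁ t + F₁ t) := by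
    intro t ht
    have ht3 : T₃ ≤ t := le_trans hT₄3.le ht
    have hKt := hK t (le_trans hT₄0 ht)
    rw [hKdef] at hKt
    simp only at hKt
    have hX2A : 2 * A ≤ F₁ t ^ (q + 1) := by
      calc 2 * A = ((2 * A) ^ (q + 1)⁻¹) ^ (q + 1) :=
            (Real.rpow_inv_rpow (by positivity) hq1.ne').symm
        _ ≤ F₁ t ^ (q + 1) :=
            Real.rpow_le_rpow (by positivity) (hT₄ t ht) hq1.le
    have hw : 0 < k₄ * (Real.exp (-β₃ * t) * (t + R) ^ (-β₂)) := by
      have := hRp t ht3; positivity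
    have hnn : 0 ≤ (q + 1)⁻¹ * (k₄ * (Real.exp (-β₃ * t) * (t + R) ^ (-β₂))
        * (F₁ t ^ (q + 1) / 2 - A)) :=
      mul_nonneg (by positivity) (mul_nonneg hw.le (by linarith))
    have heq : (2 * (q + 1))⁻¹ * (k₄ * (Real.exp (-β₃ * t) * (t + R) ^ (-β₂)) * F₁ t ^ (q + 1))
        = (q + 1)⁻¹ * (k₄ * (Real.exp (-β₃ * t) * (t + R) ^ (-β₂))
            * (F₁ t ^ (q + 1) / 2)) := by
      rw [mul_inv]
      ring
    linarith [hKt, hnn, heq]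
  -- Step C : L ≥ 0 on [T₄, ∞)
  set B : ℝ := F₁ T₄ ^ (q + 2) with hBdef
  have hBpos : 0 < B := Real.rpow_pos_of_pos (ha T₄ hT₄3.le) _
  set L : ℝ → ℝ := fun s => F₂ s * (deriv F₁ s + F₁ s) ^ (2:ℕ) -
      (2 * (q + 1) * (q + 2))⁻¹
        * (k₄ * (Real.exp (-β₃ * s) * (s + R) ^ (-β₂)) * (F₁ s ^ (q + 2) - B)) with hLdef
  have HL : ∀ s, T₃ < s → HasDerivAt L
      (deriv F₂ s * (deriv F₁ s + F₁ s) ^ (2:ℕ)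
        + F₂ s * ((2:ℕ) * (deriv F₁ s + F₁ s) ^ (2 - 1)
            * (deriv (deriv F₁) s + deriv F₁ s))
        - (2 * (q + 1) * (q + 2))⁻¹
            * ((k₄ * ((Real.exp (-β₃ * s) * (-β₃ * 1)) * (s + R) ^ (-β₂)
                + Real.exp (-β₃ * s) * (1 * (-β₂) * (s + R) ^ (-β₂ - 1)))) * (F₁ s ^ (q + 2) - B)
              + k₄ * (Real.exp (-β₃ * s) * (s + R) ^ (-β₂))
                * (deriv F₁ s * (q + 2) * F₁ s ^ (q + 2 - 1)))) s := by
    intro s hs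
    have hsR : 0 < s + R := hRp s hs.le
    have he : HasDerivAt (fun x : ℝ => Real.exp (-β₃ * x)) (Real.exp (-β₃ * s) * (-β₃ * 1)) s :=
      (HasDerivAt.const_mul (-β₃) (hasDerivAt_id s)).exp
    have hr : HasDerivAt (fun x : ℝ => (x + R) ^ (-β₂)) (1 * (-β₂) * (s + R) ^ (-β₂ - 1)) s :=
      ((hasDerivAt_id s).add_const R).rpow_const (Or.inl hsR.ne')
    have hpow : HasDerivAt (fun x => F₁ x ^ (q + 2))
        (deriv F₁ s * (q + 2) * F₁ s ^ (q + 2 - 1)) s :=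
      (hd1 s hs).rpow_const (Or.inl (ha s hs.le).ne')
    exact ((hd2 s hs).mul (((hd1' s hs).add (hd1 s hs)).pow 2)).sub
      ((((he.mul hr).const_mul k₄).mul (hpow.sub_const B)).const_mul
        ((2 * (q + 1) * (q + 2))⁻¹))
  have hL : ∀ t, T₄ ≤ t → 0 ≤ L t := by
    apply nonneg_of_deriv_nonneg'
    · intro x hx
      exact (HL x (lt_of_lt_of_le hT₄3 hx)).differentiableAt
    · show (0:ℝ) ≤ L T₄
      rw [hLdef]
      simp only [hBdef, sub_self, mul_zero, sub_zero]
      exact mul_nonneg (hc T₄ hT₄3.le).le (by positivity)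
    · intro x hx
      have hx3 : T₃ < x := lt_trans hT₄3 hx
      rw [(HL x hx3).deriv]
      have hE : 0 < Real.exp (-β₃ * x) := Real.exp_pos _
      have hxR : 0 < x + R := hRp x hx3.le
      have hP : 0 < (x + R) ^ (-β₂) := Real.rpow_pos_of_pos hxR _
      have hP' : 0 < (x + R) ^ (-β₂ - 1) := Real.rpow_pos_of_pos hxR _
      have hax : 0 < F₁ x := ha x hx3.le
      have haq1 : 0 < F₁ x ^ (q + 1) := Real.rpow_pos_of_pos hax _
      have hb : 0 ≤ deriv F₁ x := h1' x hx3.le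
      have hH'x : 0 ≤ deriv (deriv F₁) x + deriv F₁ x := hH' x hx3.le
      have hcx : 0 < F₂ x := hc x hx3.le
      have hYB : B ≤ F₁ x ^ (q + 2) := by
        rw [hBdef]
        exact Real.rpow_le_rpow (ha T₄ hT₄3.le).le
          (hF1mono (mem_Ici.2 hT₄3.le) (mem_Ici.2 hx3.le) (le_of_lt hx)) hq2.le
      have hexp : F₁ x ^ (q + 2 - 1) = F₁ x ^ (q + 1) := by congr 1; ring
      rw [hexp]
      have hKBx := hKB x (le_of_lt hx)
      have e2 : (k₄ * ((Real.exp (-β₃ * x) * (-β₃ * 1)) * (x + R) ^ (-β₂)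
            + Real.exp (-β₃ * x) * (1 * (-β₂) * (x + R) ^ (-β₂ - 1)))) ≤ 0 := by
        nlinarith [mul_nonneg (mul_nonneg (mul_nonneg hk₄.le hβ₃) hE.le) hP.le,
          mul_nonneg (mul_nonneg (mul_nonneg hk₄.le hβ₂) hE.le) hP'.le]
      have e3 : (2 * (q + 1) * (q + 2))⁻¹
            * ((k₄ * ((Real.exp (-β₃ * x) * (-β₃ * 1)) * (x + R) ^ (-β₂)
              + Real.exp (-β₃ * x) * (1 * (-β₂) * (x + R) ^ (-β₂ - 1))))
              * (F₁ x ^ (q + 2) - B)) ≤ 0 :=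
        mul_nonpos_of_nonneg_of_nonpos (by positivity)
          (mul_nonpos_of_nonpos_of_nonneg e2 (by linarith))
      -- F₂' H² ≥ (2(q+1))⁻¹ w a^{q+1} H ≥ (2(q+1))⁻¹ w a^{q+1} b
      have e4 : (2 * (q + 1))⁻¹ * (k₄ * (Real.exp (-β₃ * x) * (x + R) ^ (-β₂))
            * F₁ x ^ (q + 1)) * (deriv F₁ x + F₁ x)
          ≤ deriv F₂ x * (deriv F₁ x + F₁ x) * (deriv F₁ x + F₁ x) :=
        mul_le_mul_of_nonneg_right hKBx (by linarith)
      have e5 : (2 * (q + 1))⁻¹ * (k₄ * (Real.exp (-β₃ * x) * (x + R) ^ (-β₂))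
            * F₁ x ^ (q + 1)) * deriv F₁ x
          ≤ (2 * (q + 1))⁻¹ * (k₄ * (Real.exp (-β₃ * x) * (x + R) ^ (-β₂))
            * F₁ x ^ (q + 1)) * (deriv F₁ x + F₁ x) := by
        apply mul_le_mul_of_nonneg_left (by linarith)
        positivity
      have e6 : 0 ≤ F₂ x * ((2:ℕ) * (deriv F₁ x + F₁ x) ^ (2 - 1)
            * (deriv (deriv F₁) x + deriv F₁ x)) := by
        have h21 : ((2:ℕ) - 1) = 1 := rfl
        rw [h21, pow_one]
        have : (0:ℝ) ≤ deriv F₁ x + F₁ x := by linarith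
        positivity
      have e1 : (2 * (q + 1) * (q + 2))⁻¹
            * (k₄ * (Real.exp (-β₃ * x) * (x + R) ^ (-β₂))
              * (deriv F₁ x * (q + 2) * F₁ x ^ (q + 1)))
          = (2 * (q + 1))⁻¹ * (k₄ * (Real.exp (-β₃ * x) * (x + R) ^ (-β₂))
              * F₁ x ^ (q + 1)) * deriv F₁ x := by
        rw [mul_inv, mul_inv]
        field_simp
      have hsq : deriv F₂ x * (deriv F₁ x + F₁ x) ^ (2:ℕ)
          = deriv F₂ x * (deriv F₁ x + F₁ x) * (deriv F₁ x + F₁ x) := by ring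
      have e7 : 0 ≤ (2 * (q + 1))⁻¹ * (k₄ * (Real.exp (-β₃ * x) * (x + R) ^ (-β₂))
            * F₁ x ^ (q + 1)) * F₁ x := by positivity
      set C2 : ℝ := (2 * (q + 1) * (q + 2))⁻¹ with hC2
      set C1 : ℝ := (2 * (q + 1))⁻¹ with hC1
      linarith [e1, e3, e4, e5, e6, e7, hsq]
  -- Step D : conclude
  obtain ⟨T₈', hT₈'0, hT₈'⟩ := hbig ((2 * B) ^ (q + 2)⁻¹)
  refine ⟨max T₄ T₈', by linarith [le_max_left T₄ T₈'], ?_⟩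
  intro t ht
  have ht4 : T₄ ≤ t := le_trans (le_max_left _ _) ht
  have ht8 : T₈' ≤ t := le_trans (le_max_right _ _) ht
  have ht3 : T₃ ≤ t := le_trans hT₄3.le ht4
  have hLt := hL t ht4
  rw [hLdef] at hLt
  simp only at hLt
  have hY2B : 2 * B ≤ F₁ t ^ (q + 2) := by
    calc 2 * B = ((2 * B) ^ (q + 2)⁻¹) ^ (q + 2) :=
          (Real.rpow_inv_rpow (by positivity) hq2.ne').symm
      _ ≤ F₁ t ^ (q + 2) :=
          Real.rpow_le_rpow (by positivity) (hT₈' t ht8) hq2.le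
  have hw : 0 < k₄ * (Real.exp (-β₃ * t) * (t + R) ^ (-β₂)) := by
    have := hRp t ht3; positivity
  have hnn : 0 ≤ (2 * (q + 1) * (q + 2))⁻¹ * (k₄ * (Real.exp (-β₃ * t) * (t + R) ^ (-β₂))
      * (F₁ t ^ (q + 2) / 2 - B)) :=
    mul_nonneg (by positivity) (mul_nonneg hw.le (by linarith))
  have heq : k₄ / (4 * (q + 1) * (q + 2)) * Real.exp (-β₃ * t) * (t + R) ^ (-β₂)
        * F₁ t ^ (q + 2)
      = (2 * (q + 1) * (q + 2))⁻¹ * (k₄ * (Real.exp (-β₃ * t) * (t + R) ^ (-β₂))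
        * (F₁ t ^ (q + 2) / 2)) := by
    field_simp
    ring
  linarith [hLt, hnn, heq]
end

section
/- Let κ > 0, γ ≥ 0, β > 1, α ∈ ℝ, R > 0 and T₉ ≥ 0 with T' > T₉. If Z : [T₉, T'] → ℝ is continuously differentiable, Z(t) > 0 for all t ∈ [T₉, T'], and Z'(t) + Z(t) ≥ κ e^{-γ t}(t+R)^{-α} Z(t)^β for all t ∈ [T₉, T'], then necessarily (e^{T₉} Z(T₉))^{1-β} > κ(β−1) ∫_{T₉}^{T'} e^{-(β+γ−1)τ}(τ+R)^{-α} dτ. Equivalently, no such positive C¹ supersolution exists on [T₉, T'] once (e^{T₉} Z(T₉))^{1-β} ≤ κ(β−1) ∫_{T₉}^{T'} e^{-(β+γ−1)τ}(τ+R)^{-α} dτ. -/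
open Real Set intervalIntegral

/-- Blow-up mechanism: a positive `C¹` supersolution of
`Z' + Z ≥ κ e^{-γt}(t+R)^{-α} Z^β` on `[T₉, T']` forces
`(e^{T₉} Z(T₉))^{1-β} > κ(β-1)∫_{T₉}^{T'} e^{-(β+γ-1)τ}(τ+R)^{-α} dτ`. -/
theorem stmt_9
    (κ γ β α R T₉ T' : ℝ)
    (hκ : 0 < κ) (hγ : 0 ≤ γ) (hβ : 1 < β) (hR : 0 < R)
    (hT₉ : 0 ≤ T₉) (hT' : T₉ < T')
    (Z : ℝ → ℝ)
    (hZ : ContDiffOn ℝ 1 Z (Icc T₉ T'))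
    (hpos : ∀ t ∈ Icc T₉ T', 0 < Z t)
    (hineq : ∀ t ∈ Icc T₉ T',
      κ * Real.exp (-γ * t) * (t + R) ^ (-α) * (Z t) ^ β ≤ deriv Z t + Z t) :
    κ * (β - 1) * (∫ τ in T₉..T', Real.exp (-(β + γ - 1) * τ) * (τ + R) ^ (-α)) <
      (Real.exp T₉ * Z T₉) ^ (1 - β) := by
  set h : ℝ → ℝ := fun τ => Real.exp (-(β + γ - 1) * τ) * (τ + R) ^ (-α) with hh
  have hposR : ∀ t ∈ Icc T₉ T', 0 < t + R := fun t ht => by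
    have := ht.1; linarith
  have hcont_h : ContinuousOn h (Icc T₉ T') := by
    apply ContinuousOn.mul
    · exact (Real.continuous_exp.comp (continuous_const.mul continuous_id)).continuousOn
    · exact (continuousOn_id.add continuousOn_const).rpow_const
        (fun x hx => Or.inl (hposR x hx).ne')
  have hcont_h' : ContinuousOn h (Ioi (-R)) := by
    apply ContinuousOn.mul
    · exact (Real.continuous_exp.comp (continuous_const.mul continuous_id)).continuousOn
    · refine (continuousOn_id.add continuousOn_const).rpow_const
        (fun x hx => Or.inl ?_)
      have : -R < x := hx
      show x + R ≠ 0; intro hc; linarith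
  have hmeas_h : ∀ x ∈ Ioi (-R), StronglyMeasurableAtFilter h (nhds x) MeasureTheory.volume :=
    ContinuousOn.stronglyMeasurableAtFilter isOpen_Ioi hcont_h'
  have hWpos : ∀ t ∈ Icc T₉ T', 0 < Real.exp t * Z t := fun t ht =>
    mul_pos (Real.exp_pos t) (hpos t ht)
  set G : ℝ → ℝ := fun t => (Real.exp t * Z t) ^ (1 - β) with hG
  set H : ℝ → ℝ := fun t => G t + κ * (β - 1) * ∫ τ in T₉..t, h τ with hH
  have hderiv : ∀ t ∈ Ioo T₉ T', HasDerivAt H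
      ((Real.exp t * Z t + Real.exp t * deriv Z t) * (1 - β) *
        (Real.exp t * Z t) ^ (1 - β - 1) + κ * (β - 1) * h t) t := by
    intro t ht
    have ht' : t ∈ Icc T₉ T' := Ioo_subset_Icc_self ht
    have hZd : DifferentiableAt ℝ Z t :=
      ((hZ.differentiableOn one_ne_zero).differentiableAt (Icc_mem_nhds ht.1 ht.2))
    have hW : HasDerivAt (fun s => Real.exp s * Z s)
        (Real.exp t * Z t + Real.exp t * deriv Z t) t :=
      (Real.hasDerivAt_exp t).mul hZd.hasDerivAt
    have hGd : HasDerivAt G ((Real.exp t * Z t + Real.exp t * deriv Z t) * (1 - β) *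
        (Real.exp t * Z t) ^ (1 - β - 1)) t :=
      hW.rpow_const (Or.inl (hWpos t ht').ne')
    have hint : IntervalIntegrable h MeasureTheory.volume T₉ t := by
      refine (hcont_h.mono ?_).intervalIntegrable
      rw [uIcc_of_le ht.1.le]
      exact Icc_subset_Icc le_rfl ht.2.le
    have hca : ContinuousAt h t := by
      apply ContinuousAt.mul
      · exact (Real.continuous_exp.comp (continuous_const.mul continuous_id)).continuousAt
      · exact ContinuousAt.rpow_const ((continuous_id.add continuous_const).continuousAt)
          (Or.inl (hposR t ht').ne')
    have hI : HasDerivAt (fun u => ∫ τ in T₉..u, h τ) (h t) t :=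
      intervalIntegral.integral_hasDerivAt_right hint
        (hmeas_h t (by have := hposR t ht'; simp only [mem_Ioi]; linarith)) hca
    exact hGd.add (hI.const_mul (κ * (β - 1)))
  have hle : ∀ t ∈ Ioo T₉ T',
      (Real.exp t * Z t + Real.exp t * deriv Z t) * (1 - β) *
        (Real.exp t * Z t) ^ (1 - β - 1) + κ * (β - 1) * h t ≤ 0 := by
    intro t ht
    have ht' : t ∈ Icc T₉ T' := Ioo_subset_Icc_self ht
    have hz : 0 < Z t := hpos t ht'
    have hw : 0 < Real.exp t * Z t := hWpos t ht'
    have hwp : 0 < (Real.exp t * Z t) ^ (1 - β - 1) := Real.rpow_pos_of_pos hw _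
    have hP : 0 < (t + R) ^ (-α) := Real.rpow_pos_of_pos (hposR t ht') _
    have h1 := hineq t ht'
    have hneg : (1 - β) * (Real.exp t * Z t) ^ (1 - β - 1) < 0 :=
      mul_neg_of_neg_of_pos (by linarith) hwp
    have hstep : (Real.exp t * Z t + Real.exp t * deriv Z t) * (1 - β) *
        (Real.exp t * Z t) ^ (1 - β - 1) ≤
        Real.exp t * (κ * Real.exp (-γ * t) * (t + R) ^ (-α) * Z t ^ β) *
          ((1 - β) * (Real.exp t * Z t) ^ (1 - β - 1)) := by
      have he : 0 < Real.exp t := Real.exp_pos t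
      nlinarith [mul_le_mul_of_nonneg_left h1 he.le, hneg,
        mul_le_mul_of_nonpos_right (mul_le_mul_of_nonneg_left h1 he.le) hneg.le]
    have hkey : Real.exp t * (κ * Real.exp (-γ * t) * (t + R) ^ (-α) * Z t ^ β) *
        ((1 - β) * (Real.exp t * Z t) ^ (1 - β - 1)) = -(κ * (β - 1) * h t) := by
      have e1 : (Real.exp t * Z t) ^ (1 - β - 1) =
          Real.exp (t * (1 - β - 1)) * Z t ^ (1 - β - 1) := by
        rw [Real.mul_rpow (Real.exp_pos t).le hz.le, Real.exp_mul]
      have e2 : Z t ^ β * Z t ^ (1 - β - 1) = Z t ^ (0 : ℝ) := by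
        rw [← Real.rpow_add hz]; ring_nf
      have e3 : Real.exp t * Real.exp (-γ * t) * Real.exp (t * (1 - β - 1)) =
          Real.exp (-(β + γ - 1) * t) := by
        rw [← Real.exp_add, ← Real.exp_add]; ring_nf
      rw [e1, hh]
      have : Real.exp t * (κ * Real.exp (-γ * t) * (t + R) ^ (-α) * Z t ^ β) *
          ((1 - β) * (Real.exp (t * (1 - β - 1)) * Z t ^ (1 - β - 1))) =
          κ * (1 - β) * (Real.exp t * Real.exp (-γ * t) * Real.exp (t * (1 - β - 1))) *
            (t + R) ^ (-α) * (Z t ^ β * Z t ^ (1 - β - 1)) := by ring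
      rw [this, e2, e3, Real.rpow_zero]
      ring
    linarith [hstep, hkey.le, hkey.ge]
  have hIcc : uIcc T₉ T' = Icc T₉ T' := uIcc_of_le hT'.le
  have hanti : AntitoneOn H (Icc T₉ T') := by
    apply antitoneOn_of_deriv_nonpos (convex_Icc T₉ T')
    · apply ContinuousOn.add
      · exact ((Real.continuous_exp.continuousOn.mul hZ.continuousOn).rpow_const
          (fun x hx => Or.inl (hWpos x hx).ne'))
      · apply continuousOn_const.mul
        have : MeasureTheory.IntegrableOn h (uIcc T₉ T') := by
          rw [hIcc]; exact hcont_h.integrableOn_compact isCompact_Icc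
        have := intervalIntegral.continuousOn_primitive_interval this
        rwa [hIcc] at this
    · intro t ht
      rw [interior_Icc] at ht
      exact (hderiv t ht).differentiableAt.differentiableWithinAt
    · intro t ht
      rw [interior_Icc] at ht
      rw [(hderiv t ht).deriv]
      exact hle t ht
  have hfin := hanti (left_mem_Icc.2 hT'.le) (right_mem_Icc.2 hT'.le) hT'.le
  have hH9 : H T₉ = G T₉ := by simp [hH]
  have hGT : 0 < G T' := Real.rpow_pos_of_pos (hWpos T' (right_mem_Icc.2 hT'.le)) _
  rw [hH9] at hfin
  have : G T' + κ * (β - 1) * ∫ τ in T₉..T', h τ ≤ G T₉ := hfin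
  calc κ * (β - 1) * (∫ τ in T₉..T', h τ)
      < G T' + κ * (β - 1) * ∫ τ in T₉..T', h τ := by linarith
    _ ≤ G T₉ := this
end

section
/- Let γ > 0, R > 0 and t₀ ≥ 0. Then there exists t₁ > t₀ such that for all t ≥ t₁: e^{-t} ∫_{t₀}^{t} e^{τ}(τ+R)^{γ} dτ ≥ (1/4)(t+R)^{γ}. -/
open Real Set intervalIntegral

/-- Lower bound for an exponentially weighted integral of a power function. -/
theorem stmt_13
    (γ R t₀ : ℝ) (hγ : 0 < γ) (hR : 0 < R) (ht₀ : 0 ≤ t₀) :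
    ∃ t₁, t₀ < t₁ ∧ ∀ t, t₁ ≤ t →
      (1 / 4) * (t + R) ^ γ ≤
        Real.exp (-t) * ∫ τ in t₀..t, Real.exp τ * (τ + R) ^ γ := by
  set c : ℝ := (Real.exp 1 / 4) ^ γ⁻¹ with hc
  have he4 : Real.exp 1 / 4 < 1 := by
    have := Real.exp_one_lt_d9; linarith
  have he4pos : 0 < Real.exp 1 / 4 := by positivity
  have hc1 : c < 1 := Real.rpow_lt_one he4pos.le he4 (by positivity)
  have hcpos : 0 < c := Real.rpow_pos_of_pos he4pos _
  have h1c : 0 < 1 - c := by linarith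
  refine ⟨max (t₀ + 1) (1 / (1 - c)), lt_of_lt_of_le (by linarith) (le_max_left _ _), ?_⟩
  intro t ht
  have ht1 : t₀ + 1 ≤ t := le_trans (le_max_left _ _) ht
  have ht2 : 1 / (1 - c) ≤ t := le_trans (le_max_right _ _) ht
  -- continuity / integrability
  have hInt : ∀ a b : ℝ, t₀ ≤ min a b →
      IntervalIntegrable (fun τ => Real.exp τ * (τ + R) ^ γ) MeasureTheory.volume a b := by
    intro a b hab
    apply ContinuousOn.intervalIntegrable
    apply ContinuousOn.mul Real.continuous_exp.continuousOn
    intro x hx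
    have hx0 : 0 < x + R := by
      have : min a b ≤ x := by
        rcases hx with ⟨h1, _⟩
        simpa [min_def] using h1
      nlinarith
    exact ((continuousAt_id.add continuousAt_const).rpow_const
      (Or.inl hx0.ne')).continuousWithinAt
  have hta : t₀ ≤ t - 1 := by linarith
  -- split the integral
  have hsplit : (∫ τ in t₀..(t-1), Real.exp τ * (τ + R) ^ γ) +
      (∫ τ in (t-1)..t, Real.exp τ * (τ + R) ^ γ) =
      ∫ τ in t₀..t, Real.exp τ * (τ + R) ^ γ := by
    apply intervalIntegral.integral_add_adjacent_intervals
    · exact hInt _ _ (le_min le_rfl hta)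
    · exact hInt _ _ (le_min hta (by linarith))
  have hnn : 0 ≤ ∫ τ in t₀..(t-1), Real.exp τ * (τ + R) ^ γ := by
    apply intervalIntegral.integral_nonneg hta
    intro u hu
    have : 0 ≤ u + R := by rcases hu with ⟨h1, _⟩; nlinarith
    positivity
  -- lower bound on [t-1, t]
  have hlow : Real.exp (t-1) * (t - 1 + R) ^ γ ≤ ∫ τ in (t-1)..t, Real.exp τ * (τ + R) ^ γ := by
    have hmono : (∫ τ in (t-1)..t, Real.exp (t-1) * (t - 1 + R) ^ γ) ≤
        ∫ τ in (t-1)..t, Real.exp τ * (τ + R) ^ γ := by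
      apply intervalIntegral.integral_mono_on (by linarith)
        (intervalIntegrable_const) (hInt _ _ (le_min hta (by linarith)))
      intro x hx
      rcases hx with ⟨h1, h2⟩
      have h0 : (0:ℝ) < t - 1 + R := by linarith
      have : (t - 1 + R) ^ γ ≤ (x + R) ^ γ :=
        Real.rpow_le_rpow h0.le (by linarith) hγ.le
      have he : Real.exp (t-1) ≤ Real.exp x := Real.exp_le_exp.mpr h1
      have hxp : 0 ≤ (x + R) ^ γ := Real.rpow_nonneg (by linarith) _
      nlinarith [Real.exp_pos (t-1), Real.rpow_nonneg h0.le γ]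
    calc Real.exp (t-1) * (t - 1 + R) ^ γ
        = ∫ τ in (t-1)..t, Real.exp (t-1) * (t - 1 + R) ^ γ := by simp
      _ ≤ _ := hmono
  -- combine
  have hmain : Real.exp (-1) * (t - 1 + R) ^ γ ≤
      Real.exp (-t) * ∫ τ in t₀..t, Real.exp τ * (τ + R) ^ γ := by
    rw [← hsplit]
    have hep : 0 < Real.exp (-t) := Real.exp_pos _
    have h2 : Real.exp (t-1) * (t - 1 + R) ^ γ ≤
        (∫ τ in t₀..(t-1), Real.exp τ * (τ + R) ^ γ) +
        (∫ τ in (t-1)..t, Real.exp τ * (τ + R) ^ γ) := by linarith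
    have := mul_le_mul_of_nonneg_left h2 hep.le
    calc Real.exp (-1) * (t - 1 + R) ^ γ
        = Real.exp (-t) * (Real.exp (t-1) * (t - 1 + R) ^ γ) := by
          rw [← mul_assoc, ← Real.exp_add]; ring_nf
      _ ≤ _ := this
  refine le_trans ?_ hmain
  -- (1/4)(t+R)^γ ≤ e^{-1} (t-1+R)^γ
  have hcs : c * (t + R) ≤ t - 1 + R := by
    have h : 1 ≤ (1 - c) * t := by
      rw [div_le_iff₀ h1c] at ht2; linarith
    nlinarith
  have hstep : (c * (t + R)) ^ γ ≤ (t - 1 + R) ^ γ :=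
    Real.rpow_le_rpow (mul_nonneg hcpos.le (by linarith)) hcs hγ.le
  have hcg : c ^ γ = Real.exp 1 / 4 := by
    rw [hc, ← Real.rpow_mul he4pos.le, inv_mul_cancel₀ hγ.ne', Real.rpow_one]
  have hmul : (c * (t + R)) ^ γ = (Real.exp 1 / 4) * (t + R) ^ γ := by
    rw [Real.mul_rpow hcpos.le (by linarith : (0:ℝ) ≤ t + R), hcg]
  rw [hmul] at hstep
  have hexp : Real.exp (-1) = 1 / Real.exp 1 := by
    rw [Real.exp_neg]; ring
  rw [hexp]
  have heq : (1/4 : ℝ) * (t + R) ^ γ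
      = (1 / Real.exp 1) * (Real.exp 1 / 4 * (t + R) ^ γ) := by
    field_simp [(Real.exp_pos 1).ne']
  rw [heq]
  exact mul_le_mul_of_nonneg_left hstep (by positivity)
end

section
/- Let c > 0, R > 0 and σ > −1. Let H : [0, ∞) → ℝ be twice continuously differentiable with H(0) ≥ 0, H'(0) + H(0) ≥ 0, and H''(t) + H'(t) ≥ c(t+R)^{σ} for all t ≥ 0. Then there exists T > 0 such that for all t ≥ T: H(t) ≥ (c/(8(σ+1))) (t+R)^{σ+1}. -/
open Real Set Filter Topology

set_option maxHeartbeats 1600000 in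
/-- Polynomial lower bound for a solution of `H'' + H' ≥ c(t+R)^σ`. -/
theorem stmt_14
    (c R σ : ℝ) (hc : 0 < c) (hR : 0 < R) (hσ : -1 < σ)
    (H : ℝ → ℝ)
    (hH : ContDiffOn ℝ 2 H (Ici 0))
    (hH0 : 0 ≤ H 0) (hH0' : 0 ≤ deriv H 0 + H 0)
    (hineq : ∀ t, 0 ≤ t → c * (t + R) ^ σ ≤ deriv (deriv H) t + deriv H t) :
    ∃ T, 0 < T ∧ ∀ t, T ≤ t →
      c / (8 * (σ + 1)) * (t + R) ^ (σ + 1) ≤ H t := by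
  have hp : (0:ℝ) < σ + 1 := by linarith
  set p : ℝ := σ + 1 with hpdef
  set b : ℝ := c / (σ + 1) with hbdef
  have hb : 0 < b := div_pos hc hp
  have hbσ : b * (σ + 1) = c := div_mul_cancel₀ c (ne_of_gt hp)
  -- smoothness on Ioi 0
  have hHo : ContDiffOn ℝ 2 H (Ioi 0) := hH.mono (fun x hx => mem_Ici.2 (le_of_lt (mem_Ioi.1 hx)))
  have hHd : DifferentiableOn ℝ H (Ioi 0) := hHo.differentiableOn two_ne_zero
  have hd1 : ContDiffOn ℝ 1 (deriv H) (Ioi 0) :=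
    hHo.deriv_of_isOpen isOpen_Ioi (by norm_num)
  have hH'cont : ContinuousOn (deriv H) (Ioi 0) := hd1.continuousOn
  have hH'd : DifferentiableOn ℝ (deriv H) (Ioi 0) := hd1.differentiableOn one_ne_zero
  have hHt : ∀ x : ℝ, 0 < x → HasDerivAt H (deriv H x) x := fun x hx =>
    ((hHd x hx).differentiableAt (isOpen_Ioi.mem_nhds hx)).hasDerivAt
  have hH't : ∀ x : ℝ, 0 < x → HasDerivAt (deriv H) (deriv (deriv H) x) x := fun x hx =>
    ((hH'd x hx).differentiableAt (isOpen_Ioi.mem_nhds hx)).hasDerivAt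
  -- rpow derivative helper
  have hrpow : ∀ (q x : ℝ), 0 < x + R →
      HasDerivAt (fun t : ℝ => (t + R) ^ q) (q * (x + R) ^ (q - 1)) x := by
    intro q x hx
    have h1 : HasDerivAt (fun t : ℝ => t + R) 1 x := (hasDerivAt_id x).add_const R
    have h2 : HasDerivAt (fun y : ℝ => y ^ q) (q * (x + R) ^ (q - 1)) (x + R) :=
      Real.hasDerivAt_rpow_const (Or.inl (ne_of_gt hx))
    simpa [Function.comp_def] using h2.comp x h1
  have hpowcont : Continuous (fun t : ℝ => (t + R) ^ p) :=
    (Real.continuous_rpow_const hp.le).comp (continuous_id.add continuous_const)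
  set P : ℝ → ℝ := fun t => deriv H t + H t with hPdef
  -- Step 1: lower bound for P on [1, ∞)
  set A : ℝ := P 1 - b * ((1:ℝ) + R) ^ p with hAdef
  have hPlb : ∀ t : ℝ, 1 ≤ t → A + b * (t + R) ^ p ≤ P t := by
    have hmono : MonotoneOn (fun t => P t - b * (t + R) ^ p) (Ici 1) := by
      apply monotoneOn_of_deriv_nonneg (convex_Ici 1)
      · have h01 : Ici (1:ℝ) ⊆ Ioi 0 := fun x hx => mem_Ioi.2 (lt_of_lt_of_le one_pos (mem_Ici.1 hx))
        exact (((hH'cont.mono h01).add (hHd.continuousOn.mono h01)).sub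
          (hpowcont.continuousOn.const_smul b))
      · intro x hx
        rw [interior_Ici] at hx
        have hx0 : (0:ℝ) < x := lt_trans one_pos hx
        have hxR : (0:ℝ) < x + R := by linarith
        exact (((hH't x hx0).add (hHt x hx0)).sub
          ((hrpow p x hxR).const_mul b)).differentiableAt.differentiableWithinAt
      · intro x hx
        rw [interior_Ici] at hx
        have hx0 : (0:ℝ) < x := lt_trans one_pos hx
        have hxR : (0:ℝ) < x + R := by linarith
        have hQ : HasDerivAt (fun t => P t - b * (t + R) ^ p)
            (deriv (deriv H) x + deriv H x - b * (p * (x + R) ^ (p - 1))) x :=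
          ((hH't x hx0).add (hHt x hx0)).sub ((hrpow p x hxR).const_mul b)
        rw [hQ.deriv]
        have hps : p - 1 = σ := by rw [hpdef]; ring
        rw [hps]
        have := hineq x hx0.le
        have hbb : b * (p * (x + R) ^ σ) = c * (x + R) ^ σ := by
          rw [hpdef, ← mul_assoc, mul_comm b (σ+1), mul_comm (σ+1) b, hbσ]
        rw [hbb]; linarith
    intro t ht
    have := hmono (self_mem_Ici) ht ht
    simp only [hAdef] at *
    linarith [this]
  -- exponential-weighted function
  set G : ℝ → ℝ := fun t => Real.exp t * H t with hGdef
  have hGt : ∀ x : ℝ, 0 < x → HasDerivAt G (Real.exp x * P x) x := by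
    intro x hx
    have h := (Real.hasDerivAt_exp x).mul (hHt x hx)
    have : Real.exp x * P x = Real.exp x * H x + Real.exp x * deriv H x := by
      rw [hPdef]; ring
    rw [this]; exact h
  -- Step 2a: G t ≥ G 1 + P 1 * (exp t - exp 1) for t ≥ 1
  have hG1 : ∀ t : ℝ, 1 ≤ t → G 1 + P 1 * (Real.exp t - Real.exp 1) ≤ G t := by
    have hmono : MonotoneOn (fun s => G s - P 1 * Real.exp s) (Ici 1) := by
      apply monotoneOn_of_deriv_nonneg (convex_Ici 1)
      · have h01 : Ici (1:ℝ) ⊆ Ioi 0 := fun x hx => mem_Ioi.2 (lt_of_lt_of_le one_pos (mem_Ici.1 hx))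
        exact ((Real.continuous_exp.continuousOn.mul
          (hHd.continuousOn.mono h01)).sub
          ((continuous_const.mul Real.continuous_exp).continuousOn))
      · intro x hx
        rw [interior_Ici] at hx
        have hx0 : (0:ℝ) < x := lt_trans one_pos hx
        exact ((hGt x hx0).sub ((Real.hasDerivAt_exp x).const_mul (P 1)))
          |>.differentiableAt.differentiableWithinAt
      · intro x hx
        rw [interior_Ici] at hx
        have hx1 : (1:ℝ) < x := hx
        have hx0 : (0:ℝ) < x := lt_trans one_pos hx
        have hd : HasDerivAt (fun s => G s - P 1 * Real.exp s)
            (Real.exp x * P x - P 1 * Real.exp x) x :=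
          (hGt x hx0).sub ((Real.hasDerivAt_exp x).const_mul (P 1))
        rw [hd.deriv]
        have h1 : P 1 ≤ P x := by
          have h2 : ((1:ℝ) + R) ^ p ≤ (x + R) ^ p :=
            Real.rpow_le_rpow (by linarith) (by linarith) hp.le
          have := hPlb x hx1.le
          have hA : A + b * ((1:ℝ)+R) ^ p = P 1 := by rw [hAdef]; ring
          nlinarith [this, mul_le_mul_of_nonneg_left h2 hb.le]
        nlinarith [Real.exp_pos x, h1]
    intro t ht
    have := hmono (self_mem_Ici) ht ht
    simp only at this
    linarith
  -- Step 2b: for t ≥ 2, G t ≥ G (t-1) + (A + b*(t-1+R)^p) * (exp t - exp (t-1))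
  have hG2 : ∀ t : ℝ, 2 ≤ t →
      G (t-1) + (A + b * (t - 1 + R) ^ p) * (Real.exp t - Real.exp (t-1)) ≤ G t := by
    intro t ht
    set m : ℝ := A + b * (t - 1 + R) ^ p with hmdef
    have hmono : MonotoneOn (fun s => G s - m * Real.exp s) (Icc (t-1) t) := by
      apply monotoneOn_of_deriv_nonneg (convex_Icc _ _)
      · have h01 : Icc (t-1) t ⊆ Ioi 0 := fun x hx => mem_Ioi.2 (lt_of_lt_of_le one_pos (by
          have := hx.1; simp at this ⊢; linarith))
        exact ((Real.continuous_exp.continuousOn.mul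
          (hHd.continuousOn.mono h01)).sub
          ((continuous_const.mul Real.continuous_exp).continuousOn))
      · intro x hx
        rw [interior_Icc] at hx
        have hx0 : (0:ℝ) < x := by have := hx.1; linarith
        exact ((hGt x hx0).sub ((Real.hasDerivAt_exp x).const_mul m))
          |>.differentiableAt.differentiableWithinAt
      · intro x hx
        rw [interior_Icc] at hx
        have hx1 : (1:ℝ) ≤ x := by have := hx.1; linarith
        have hx0 : (0:ℝ) < x := by linarith
        have hd : HasDerivAt (fun s => G s - m * Real.exp s)
            (Real.exp x * P x - m * Real.exp x) x :=
          (hGt x hx0).sub ((Real.hasDerivAt_exp x).const_mul m)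
        rw [hd.deriv]
        have h2 : (t - 1 + R) ^ p ≤ (x + R) ^ p :=
          Real.rpow_le_rpow (by linarith [hx.1]) (by linarith [hx.1]) hp.le
        have h1 : m ≤ P x := by
          have := hPlb x hx1
          nlinarith [mul_le_mul_of_nonneg_left h2 hb.le]
        nlinarith [Real.exp_pos x, h1]
    have h1 : t - 1 ∈ Icc (t-1) t := ⟨le_refl _, by linarith⟩
    have h2 : t ∈ Icc (t-1) t := ⟨by linarith, le_refl _⟩
    have := hmono h1 h2 (by linarith)
    simp only at this
    linarith
  -- Step 2c: combine to a lower bound for H on [2,∞)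
  set C : ℝ := |G 1| + |P 1| + |A| with hCdef
  have hHlb : ∀ t : ℝ, 2 ≤ t → -C + (b/2) * (t - 1 + R) ^ p ≤ H t := by
    intro t ht
    have hgt := hG2 t ht
    have hg1 := hG1 (t-1) (by linarith)
    have hexp : (0:ℝ) < Real.exp t := Real.exp_pos t
    -- H t = G t / exp t
    have hHt' : H t = G t / Real.exp t := by
      rw [hGdef]; field_simp
    have hGt' : G 1 + P 1 * (Real.exp (t-1) - Real.exp 1)
        + (A + b * (t - 1 + R) ^ p) * (Real.exp t - Real.exp (t-1)) ≤ G t := by linarith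
    rw [hHt', le_div_iff₀ hexp]
    set X : ℝ := (t - 1 + R) ^ p with hXdef
    set E : ℝ := Real.exp t with hEdef
    set D : ℝ := Real.exp (t-1) with hDdef
    have hX : 0 ≤ X := Real.rpow_nonneg (by linarith) p
    have hE1 : (1:ℝ) ≤ E := Real.one_le_exp (by linarith)
    have hDE : D ≤ E := Real.exp_le_exp.2 (by linarith)
    have he1D : Real.exp 1 ≤ D := Real.exp_le_exp.2 (by linarith)
    have hD0 : 0 < D := Real.exp_pos _
    have he10 : 0 < Real.exp 1 := Real.exp_pos _
    have hhalf : E / 2 ≤ E - D := by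
      have h2e : (2:ℝ) ≤ Real.exp 1 := by
        have := Real.exp_one_gt_d9; linarith
      have hmulE : D * Real.exp 1 = E := by
        rw [hDdef, hEdef, ← Real.exp_add]; norm_num
      nlinarith [hD0, h2e, hmulE]
    have t1 : -|G 1| * E ≤ G 1 := by
      have h := mul_le_mul_of_nonneg_left hE1 (abs_nonneg (G 1))
      have := neg_abs_le (G 1)
      linarith
    have t2 : -|P 1| * E ≤ P 1 * (D - Real.exp 1) := by
      have hDe : (0:ℝ) ≤ D - Real.exp 1 := by linarith
      have hDeE : D - Real.exp 1 ≤ E := by linarith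
      have a1 : -|P 1| * (D - Real.exp 1) ≤ P 1 * (D - Real.exp 1) :=
        mul_le_mul_of_nonneg_right (neg_abs_le _) hDe
      have a2 : -|P 1| * E ≤ -|P 1| * (D - Real.exp 1) :=
        mul_le_mul_of_nonpos_left hDeE (by simpa using abs_nonneg (P 1))
      linarith
    have t3a : -|A| * E ≤ A * (E - D) := by
      have hDe : (0:ℝ) ≤ E - D := by linarith
      have hDeE : E - D ≤ E := by linarith
      have a1 : -|A| * (E - D) ≤ A * (E - D) :=
        mul_le_mul_of_nonneg_right (neg_abs_le _) hDe
      have a2 : -|A| * E ≤ -|A| * (E - D) :=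
        mul_le_mul_of_nonpos_left hDeE (by simpa using abs_nonneg A)
      linarith
    have t3b : b * X * (E / 2) ≤ b * X * (E - D) :=
      mul_le_mul_of_nonneg_left hhalf (by positivity)
    rw [hCdef]
    linarith [hGt', t1, t2, t3a, t3b]
  -- Step 3: eventual comparison
  have h3 : Tendsto (fun t : ℝ => (t + R) ^ p) atTop atTop :=
    (tendsto_rpow_atTop hp).comp (tendsto_atTop_add_const_right atTop R tendsto_id)
  have E2 : ∀ᶠ t : ℝ in atTop, C ≤ b / 8 * (t + R) ^ p := by
    filter_upwards [h3.eventually_ge_atTop (8 * C / b)] with t ht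
    rw [div_le_iff₀ hb] at ht
    linarith
  have hr : Tendsto (fun t : ℝ => (t - 1 + R) / (t + R)) atTop (𝓝 1) := by
    have h0 : Tendsto (fun t : ℝ => 1 - (t + R)⁻¹) atTop (𝓝 (1 - 0)) :=
      tendsto_const_nhds.sub
        (tendsto_inv_atTop_zero.comp (tendsto_atTop_add_const_right atTop R tendsto_id))
    rw [sub_zero] at h0
    apply h0.congr'
    filter_upwards [eventually_ge_atTop (1:ℝ)] with t ht
    have htR : (0:ℝ) < t + R := by linarith
    field_simp
    ring
  have hr2 : Tendsto (fun t : ℝ => ((t - 1 + R) / (t + R)) ^ p) atTop (𝓝 1) := by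
    have hcont := (Real.continuousAt_rpow_const 1 p (Or.inl one_ne_zero)).tendsto
    have := hcont.comp hr
    simpa [Real.one_rpow, Function.comp_def] using this
  have E1 : ∀ᶠ t : ℝ in atTop, 1/2 * (t + R) ^ p ≤ (t - 1 + R) ^ p := by
    filter_upwards [hr2.eventually (eventually_ge_nhds (by norm_num : (1:ℝ)/2 < 1)),
      eventually_ge_atTop (1:ℝ)] with t h1 h2
    have ht1 : (0:ℝ) ≤ t - 1 + R := by linarith
    have ht2 : (0:ℝ) < t + R := by linarith
    rw [Real.div_rpow ht1 ht2.le] at h1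
    have hpow : (0:ℝ) < (t + R) ^ p := Real.rpow_pos_of_pos ht2 p
    rw [le_div_iff₀ hpow] at h1
    linarith
  obtain ⟨T₀, hT₀⟩ := eventually_atTop.1 (E1.and (E2.and (eventually_ge_atTop (2:ℝ))))
  refine ⟨max T₀ 2, lt_of_lt_of_le two_pos (le_max_right _ _), fun t ht => ?_⟩
  obtain ⟨e1, e2, ht2⟩ := hT₀ t (le_trans (le_max_left _ _) ht)
  have hlb := hHlb t ht2
  have hb8 : c / (8 * (σ + 1)) = b / 8 := by
    rw [hbdef, div_div, mul_comm]
  rw [hb8]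
  nlinarith [hlb, e1, e2]
end

section
/- Let K, k₃, β₁, R > 0, ν ≥ 0, a > 1, T₆ ≥ 0 and T' > T₆, and let 0 < δ ≤ (a−1)/β₁. Suppose G : [T₆, T'] → ℝ is continuously differentiable and satisfies, for all t ∈ [T₆, T']: G(t) ≥ k₃(t+R)^{β₁} and G'(t) ≥ K e^{-ν t}(t+R)^{-a} G(t)^{1 + (a−1)/β₁}. Then for all t ∈ [T₆, T']: G(T₆)^{-δ} − G(t)^{-δ} ≥ (K/β₁) k₃^{(a−1)/β₁ − δ} e^{-ν t} ((T₆+R)^{-δβ₁} − (t+R)^{-δβ₁}); in particular G(T₆)^{-δ} > (K/β₁) k₃^{(a−1)/β₁ − δ} e^{-ν T'} ((T₆+R)^{-δβ₁} − (T'+R)^{-δβ₁}), so no such G exists on [T₆, T'] once this last strict inequality fails. -/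
open Real Set

/-- Critical-case blow-up bound: a `C¹` function `G` on `[T₆, T']` with
`G(t) ≥ k₃(t+R)^{β₁}` and `G'(t) ≥ K e^{-νt}(t+R)^{-a} G(t)^{1+(a-1)/β₁}` satisfies
the stated lower bound for `G(T₆)^{-δ} - G(t)^{-δ}`, and in particular the strict
inequality at `t = T'`. -/
theorem stmt_19
    (K k₃ β₁ R ν a T₆ T' δ : ℝ)
    (hK : 0 < K) (hk₃ : 0 < k₃) (hβ₁ : 0 < β₁) (hR : 0 < R)
    (hν : 0 ≤ ν) (ha : 1 < a) (hT₆ : 0 ≤ T₆) (hT' : T₆ < T')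
    (hδ : 0 < δ) (hδ' : δ ≤ (a - 1) / β₁)
    (G : ℝ → ℝ)
    (hG : ContDiffOn ℝ 1 G (Icc T₆ T'))
    (hlow : ∀ t ∈ Icc T₆ T', k₃ * (t + R) ^ β₁ ≤ G t)
    (hineq : ∀ t ∈ Icc T₆ T',
      K * Real.exp (-ν * t) * (t + R) ^ (-a) * (G t) ^ (1 + (a - 1) / β₁) ≤ deriv G t) :
    (∀ t ∈ Icc T₆ T',
      K / β₁ * k₃ ^ ((a - 1) / β₁ - δ) * Real.exp (-ν * t) *
        ((T₆ + R) ^ (-(δ * β₁)) - (t + R) ^ (-(δ * β₁))) ≤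
      (G T₆) ^ (-δ) - (G t) ^ (-δ)) ∧
    K / β₁ * k₃ ^ ((a - 1) / β₁ - δ) * Real.exp (-ν * T') *
        ((T₆ + R) ^ (-(δ * β₁)) - (T' + R) ^ (-(δ * β₁))) <
      (G T₆) ^ (-δ) := by
  have hc : 0 ≤ (a - 1) / β₁ - δ := sub_nonneg.2 hδ'
  set c := (a - 1) / β₁ - δ with hcdef
  set m := δ * β₁ with hmdef
  have hm : 0 < m := mul_pos hδ hβ₁
  set C := K / β₁ * k₃ ^ c with hCdef
  have hCpos : 0 < C := mul_pos (div_pos hK hβ₁) (rpow_pos_of_pos hk₃ c)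
  have hpos : ∀ t ∈ Icc T₆ T', 0 < t + R := fun t ht => by
    have := ht.1; linarith
  have hGpos : ∀ t ∈ Icc T₆ T', 0 < G t := fun t ht =>
    lt_of_lt_of_le (mul_pos hk₃ (rpow_pos_of_pos (hpos t ht) β₁)) (hlow t ht)
  set F : ℝ → ℝ := fun t =>
    -(G t) ^ (-δ) - C * (Real.exp (-ν * t) * ((T₆ + R) ^ (-m) - (t + R) ^ (-m))) with hFdef
  have hIoo : interior (Icc T₆ T') = Ioo T₆ T' := interior_Icc
  -- derivative of F at interior points
  have hD : ∀ x ∈ Ioo T₆ T', HasDerivAt F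
      (-(deriv G x * (-δ) * G x ^ (-δ - 1)) -
        C * ((-ν * 1) * Real.exp (-ν * x) * ((T₆ + R) ^ (-m) - (x + R) ^ (-m)) +
          Real.exp (-ν * x) * -(1 * (-m) * (x + R) ^ (-m - 1)))) x := by
    intro x hx
    have hxI : x ∈ Icc T₆ T' := Ioo_subset_Icc_self hx
    have hGx : 0 < G x := hGpos x hxI
    have hGdiff : HasDerivAt G (deriv G x) x := by
      have h1 : DifferentiableWithinAt ℝ G (Icc T₆ T') x :=
        (hG.differentiableOn one_ne_zero) x hxI
      exact (h1.differentiableAt (Icc_mem_nhds hx.1 hx.2)).hasDerivAt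
    have h1 : HasDerivAt (fun t => (G t) ^ (-δ)) (deriv G x * (-δ) * G x ^ (-δ - 1)) x :=
      hGdiff.rpow_const (Or.inl (ne_of_gt hGx))
    have h2 : HasDerivAt (fun t : ℝ => Real.exp (-ν * t)) ((-ν * 1) * Real.exp (-ν * x)) x := by
      have := ((hasDerivAt_id x).const_mul (-ν)).exp
      simpa [mul_comm] using this
    have h3 : HasDerivAt (fun t : ℝ => (t + R) ^ (-m)) (1 * (-m) * (x + R) ^ (-m - 1)) x :=
      ((hasDerivAt_id x).add_const R).rpow_const (Or.inl (ne_of_gt (hpos x hxI)))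
    have h4 : HasDerivAt (fun t : ℝ => (T₆ + R) ^ (-m) - (t + R) ^ (-m))
        (-(1 * (-m) * (x + R) ^ (-m - 1))) x := by
      exact ((hasDerivAt_const x ((T₆ + R) ^ (-m))).sub h3).congr_deriv (by ring)
    have h5 := (h2.mul h4).const_mul C
    exact h1.neg.sub h5
  have hFcont : ContinuousOn F (Icc T₆ T') := by
    apply ContinuousOn.sub
    · exact (ContinuousOn.rpow_const (hG.continuousOn)
        (fun t ht => Or.inl (ne_of_gt (hGpos t ht)))).neg
    · apply ContinuousOn.mul continuousOn_const
      apply ContinuousOn.mul ((Real.continuous_exp.comp (continuous_const.mul continuous_id)).continuousOn)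
      exact ContinuousOn.sub continuousOn_const
        (ContinuousOn.rpow_const ((continuous_id.add continuous_const).continuousOn)
          (fun t ht => Or.inl (ne_of_gt (hpos t ht))))
  have hderiv_nonneg : ∀ x ∈ interior (Icc T₆ T'), 0 ≤ deriv F x := by
    rw [hIoo]
    intro x hx
    have hxI : x ∈ Icc T₆ T' := Ioo_subset_Icc_self hx
    have hGx : 0 < G x := hGpos x hxI
    have hxR : 0 < x + R := hpos x hxI
    rw [(hD x hx).deriv]
    set e := Real.exp (-ν * x) with hedef
    have he : 0 < e := Real.exp_pos _
    have hB : (x + R) ^ (-m) ≤ (T₆ + R) ^ (-m) := by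
      apply rpow_le_rpow_of_nonpos (by linarith [hT₆]) (by linarith [hx.1]) (by linarith)
    -- main estimate
    have key : C * m * e * (x + R) ^ (-m - 1) ≤ δ * G x ^ (-δ - 1) * deriv G x := by
      have h6 : K * e * (x + R) ^ (-a) * (G x) ^ (1 + (a - 1) / β₁) ≤ deriv G x :=
        hineq x hxI
      have hGpow : 0 < G x ^ (-δ - 1) := rpow_pos_of_pos hGx _
      have step1 : δ * G x ^ (-δ - 1) * (K * e * (x + R) ^ (-a) * (G x) ^ (1 + (a - 1) / β₁))
          ≤ δ * G x ^ (-δ - 1) * deriv G x := by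
        apply mul_le_mul_of_nonneg_left h6 (by positivity)
      refine le_trans ?_ step1
      -- LHS ≤ middle
      have hGc : k₃ ^ c * (x + R) ^ (β₁ * c) ≤ (G x) ^ c := by
        have h7 : (k₃ * (x + R) ^ β₁) ^ c ≤ (G x) ^ c :=
          rpow_le_rpow (by positivity) (hlow x hxI) hc
        calc k₃ ^ c * (x + R) ^ (β₁ * c)
            = k₃ ^ c * ((x + R) ^ β₁) ^ c := by rw [Real.rpow_mul hxR.le]
          _ = (k₃ * (x + R) ^ β₁) ^ c := (Real.mul_rpow hk₃.le (by positivity)).symm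
          _ ≤ (G x) ^ c := h7
      have hexp1 : G x ^ (-δ - 1) * (G x) ^ (1 + (a - 1) / β₁) = (G x) ^ c := by
        rw [← Real.rpow_add hGx]; congr 1; rw [hcdef]; ring
      have hexp2 : (x + R) ^ (-a) * (x + R) ^ (β₁ * c) = (x + R) ^ (-m - 1) := by
        rw [← Real.rpow_add hxR]
        congr 1
        rw [hcdef, hmdef, mul_sub]
        have h' : β₁ * ((a - 1) / β₁) = a - 1 := by field_simp [hβ₁.ne']
        rw [h']; ring
      have hCm : C * m = δ * K * k₃ ^ c := by
        rw [hCdef, hmdef]; field_simp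
      calc C * m * e * (x + R) ^ (-m - 1)
          = δ * K * e * (k₃ ^ c * ((x + R) ^ (-a) * (x + R) ^ (β₁ * c))) := by
            rw [hexp2, hCm]; ring
        _ = δ * K * e * (x + R) ^ (-a) * (k₃ ^ c * (x + R) ^ (β₁ * c)) := by ring
        _ ≤ δ * K * e * (x + R) ^ (-a) * (G x) ^ c := by
            apply mul_le_mul_of_nonneg_left hGc (by positivity)
        _ = δ * G x ^ (-δ - 1) * (K * e * (x + R) ^ (-a) * (G x) ^ (1 + (a - 1) / β₁)) := by
            rw [← hexp1]; ring
    have hν' : 0 ≤ C * ν * e * ((T₆ + R) ^ (-m) - (x + R) ^ (-m)) := by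
      have : 0 ≤ (T₆ + R) ^ (-m) - (x + R) ^ (-m) := sub_nonneg.2 hB
      positivity
    nlinarith [key, hν']
  have hFdiff : DifferentiableOn ℝ F (interior (Icc T₆ T')) := by
    rw [hIoo]
    exact fun x hx => ((hD x hx).differentiableAt).differentiableWithinAt
  have hmono : MonotoneOn F (Icc T₆ T') :=
    monotoneOn_of_deriv_nonneg (convex_Icc T₆ T') hFcont hFdiff hderiv_nonneg
  have hmain : ∀ t ∈ Icc T₆ T',
      C * Real.exp (-ν * t) * ((T₆ + R) ^ (-m) - (t + R) ^ (-m)) ≤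
      (G T₆) ^ (-δ) - (G t) ^ (-δ) := by
    intro t ht
    have h := hmono (left_mem_Icc.2 hT'.le) ht ht.1
    simp only [hFdef, sub_self, mul_zero] at h
    linarith
  constructor
  · intro t ht
    have := hmain t ht
    linarith [this]
  · have hT'I : T' ∈ Icc T₆ T' := right_mem_Icc.2 hT'.le
    have h := hmain T' hT'I
    have hGT' : 0 < (G T') ^ (-δ) := rpow_pos_of_pos (hGpos T' hT'I) _
    calc C * Real.exp (-ν * T') * ((T₆ + R) ^ (-m) - (T' + R) ^ (-m))
        < C * Real.exp (-ν * T') * ((T₆ + R) ^ (-m) - (T' + R) ^ (-m)) + (G T') ^ (-δ) := by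
          linarith
      _ ≤ (G T₆) ^ (-δ) := by linarith
end
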